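/- arXiv:1409.0222 — 10 statements merged into one kernel-verified Lean document; each statement's English description precedes it below -/
import Mathlib

section
/- Let I = I⟨a_j,φ_j⟩ be a fragmented ideal that is not gradually fragmented. Then there exist k < ω, a sequence ⟨C_i⟩_{i<ω} of pairwise disjoint infinite subsets of ω, and a sequence {l_i}_{i<ω} of natural numbers such that for every i < ω and every j ∈ C_i there exists a pairwise disjoint family B_j of subsets of a_j with |B_j| = l_i, with 0 < φ_j(b) ≤ k for every b ∈ B_j, and with i < φ_j(⋃B_j) ≤ i + k. -/
open Set Filter Cardinal

/-- `I` is an ideal on `ω`: contains all finite sets, downward closed, closed under unions. -/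
def IsIdealOn (I : Set (Set ℕ)) : Prop :=
  (∀ x : Set ℕ, x.Finite → x ∈ I) ∧
  (∀ x y : Set ℕ, x ⊆ y → y ∈ I → x ∈ I) ∧
  (∀ x y : Set ℕ, x ∈ I → y ∈ I → x ∪ y ∈ I)

/-- The pair `⟨A, B⟩` is `I`-orthogonal. -/
def IOrthogonal (I A B : Set (Set ℕ)) : Prop := ∀ s ∈ A, ∀ t ∈ B, s ∩ t ∈ I

/-- `C` separates the pair `⟨A, B⟩` with respect to `I`. -/
def ISeparates (I A B : Set (Set ℕ)) (C : Set ℕ) : Prop :=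
  (∀ s ∈ A, s ∩ C ∈ I) ∧ (∀ t ∈ B, t \ C ∈ I)

/-- The pair `⟨A, B⟩` is an `I`-gap. -/
def IsIGap (I A B : Set (Set ℕ)) : Prop :=
  IOrthogonal I A B ∧ ∀ C : Set ℕ, ¬ ISeparates I A B C

/-- There is an `I`-(ω, lam)-gap. -/
def HasOmegaGap (I : Set (Set ℕ)) (lam : Cardinal) : Prop :=
  ∃ A B : Set (Set ℕ), IsIGap I A B ∧ #A = ℵ₀ ∧ #B = lam

/-- `a` is a partition of `ω` into nonempty finite sets. -/
def IsPartitionFin (a : ℕ → Set ℕ) : Prop :=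
  (∀ i, (a i).Nonempty) ∧ (∀ i, (a i).Finite) ∧
  (∀ i j, i ≠ j → Disjoint (a i) (a j)) ∧ (⋃ i, a i) = Set.univ

/-- `φ` is a submeasure on the powerset of the set `s`. -/
def IsSubmeasureOn (s : Set ℕ) (φ : Set ℕ → ℝ) : Prop :=
  φ ∅ = 0 ∧ (∀ x, x ⊆ s → 0 ≤ φ x) ∧
  (∀ x y, x ⊆ y → y ⊆ s → φ x ≤ φ y) ∧
  (∀ x y, x ⊆ s → y ⊆ s → φ (x ∪ y) ≤ φ x + φ y)

/-- `I = I⟨a_i, φ_i⟩` is the fragmented ideal determined by the partition `a`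
and the submeasures `φ`. -/
def IsFragmentation (I : Set (Set ℕ)) (a : ℕ → Set ℕ) (φ : ℕ → Set ℕ → ℝ) : Prop :=
  IsPartitionFin a ∧ (∀ i, IsSubmeasureOn (a i) (φ i)) ∧
  ∀ x : Set ℕ, x ∈ I ↔ ∃ K : ℝ, ∀ i, φ i (x ∩ a i) ≤ K

/-- Gradual fragmentation of `⟨a_i, φ_i⟩`. -/
def GraduallyFragmented (a : ℕ → Set ℕ) (φ : ℕ → Set ℕ → ℝ) : Prop :=
  ∀ k : ℕ, ∃ m : ℕ, ∀ l : ℕ, ∀ᶠ i in atTop,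
    ∀ B : Finset (Set ℕ), (∀ b ∈ B, b ⊆ a i) → B.card ≤ l →
      (∀ b ∈ B, φ i b ≤ (k : ℝ)) → φ i (⋃₀ (↑B : Set (Set ℕ))) ≤ (m : ℝ)

/-- The restriction `I ↾ X` is tall. -/
def IsTallOn (I : Set (Set ℕ)) (X : Set ℕ) : Prop :=
  ∀ Y : Set ℕ, Y ⊆ X → Y.Infinite → ∃ Z, Z ⊆ Y ∧ Z.Infinite ∧ Z ∈ I

def IsTall (I : Set (Set ℕ)) : Prop := IsTallOn I Set.univ

def SomewhereTall (I : Set (Set ℕ)) : Prop := ∃ X : Set ℕ, X ∉ I ∧ IsTallOn I X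

def NowhereTall (I : Set (Set ℕ)) : Prop := ¬ SomewhereTall I

/-- The unbounding number `𝔟`. -/
noncomputable def unboundingNumber : Cardinal :=
  sInf {c | ∃ F : Set (ℕ → ℕ), #F = c ∧
    ∀ g : ℕ → ℕ, ∃ f ∈ F, ¬ ∀ᶠ i in atTop, f i ≤ g i}

/-- The additivity of the Lebesgue-null ideal, `add(N)`. -/
noncomputable def addNull : Cardinal :=
  sInf {c | ∃ F : Set (Set ℝ), #F = c ∧ (∀ s ∈ F, MeasureTheory.volume s = 0) ∧
    MeasureTheory.volume (⋃₀ F) ≠ 0}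

section AuxNGF
open scoped Classical

lemma aux_sUnion_subset {s : Set ℕ} {B : Finset (Set ℕ)} (h : ∀ b ∈ B, b ⊆ s) :
    ⋃₀ (↑B : Set (Set ℕ)) ⊆ s := Set.sUnion_subset (by simpa using h)

lemma aux_erase_union {B : Finset (Set ℕ)} {b : Set ℕ} (hb : b ∈ B) :
    ⋃₀ (↑B : Set (Set ℕ)) = b ∪ ⋃₀ (↑(B.erase b) : Set (Set ℕ)) := by
  have h : (↑B : Set (Set ℕ)) = insert b (↑(B.erase b) : Set (Set ℕ)) := by
    rw [← Finset.coe_insert, Finset.insert_erase hb]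
  rw [h, Set.sUnion_insert]

lemma aux_trim {s : Set ℕ} {ψ : Set ℕ → ℝ} (hψ : IsSubmeasureOn s ψ) (k r : ℝ) (hr : 0 ≤ r) :
    ∀ B : Finset (Set ℕ), (∀ b ∈ B, b ⊆ s) → (∀ b ∈ B, ψ b ≤ k) →
      r < ψ (⋃₀ (↑B : Set (Set ℕ))) →
      ∃ B' : Finset (Set ℕ), B' ⊆ B ∧ (∀ b ∈ B', 0 < ψ b) ∧
        r < ψ (⋃₀ (↑B' : Set (Set ℕ))) ∧ ψ (⋃₀ (↑B' : Set (Set ℕ))) ≤ r + k := by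
  intro B
  induction B using Finset.strongInduction with
  | _ B ih =>
    intro hsub hk hgt
    by_cases hcase : ∃ b ∈ B, r < ψ (⋃₀ (↑(B.erase b) : Set (Set ℕ)))
    · obtain ⟨b, hb, hgt'⟩ := hcase
      obtain ⟨B', hB'sub, h1, h2, h3⟩ := ih (B.erase b) (Finset.erase_ssubset hb)
        (fun c hc => hsub c (Finset.mem_of_mem_erase hc))
        (fun c hc => hk c (Finset.mem_of_mem_erase hc)) hgt'
      exact ⟨B', hB'sub.trans (Finset.erase_subset _ _), h1, h2, h3⟩
    · push_neg at hcase
      have hBne : B.Nonempty := by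
        rcases B.eq_empty_or_nonempty with h | h
        · exfalso
          rw [h] at hgt
          simp only [Finset.coe_empty, Set.sUnion_empty, hψ.1] at hgt
          linarith
        · exact h
      obtain ⟨b₀, hb₀⟩ := hBne
      have key : ∀ b ∈ B, ψ (⋃₀ (↑B : Set (Set ℕ))) ≤ r + ψ b := by
        intro b hb
        have hsa := hψ.2.2.2 b (⋃₀ (↑(B.erase b) : Set (Set ℕ))) (hsub b hb)
          (aux_sUnion_subset fun c hc => hsub c (Finset.mem_of_mem_erase hc))
        rw [← aux_erase_union hb] at hsa
        have h2 := hcase b hb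
        linarith
      refine ⟨B, Finset.Subset.refl B, ?_, hgt, ?_⟩
      · intro b hb
        by_contra h
        push_neg at h
        have := key b hb
        linarith
      · have h1 := key b₀ hb₀
        have h2 := hk b₀ hb₀
        linarith

lemma aux_disjointify (B : Finset (Set ℕ)) :
    ∃ C : Finset (Set ℕ), C.card ≤ B.card ∧ (∀ c ∈ C, ∃ b ∈ B, c ⊆ b) ∧
      ((↑C : Set (Set ℕ)).Pairwise fun x y => Disjoint x y) ∧
      ⋃₀ (↑C : Set (Set ℕ)) = ⋃₀ (↑B : Set (Set ℕ)) := by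
  classical
  induction B using Finset.induction_on with
  | empty => exact ⟨∅, by simp, by simp, by simp, by simp⟩
  | @insert b S ha ih =>
    obtain ⟨C, hcard, hin, hpw, hun⟩ := ih
    refine ⟨insert (b \ ⋃₀ (↑C : Set (Set ℕ))) C, ?_, ?_, ?_, ?_⟩
    · calc (insert (b \ ⋃₀ (↑C : Set (Set ℕ))) C).card ≤ C.card + 1 := Finset.card_insert_le _ _
        _ ≤ S.card + 1 := by omega
        _ = (insert b S).card := (Finset.card_insert_of_notMem ha).symm
    · intro c hc
      rcases Finset.mem_insert.mp hc with h | h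
      · exact ⟨b, Finset.mem_insert_self _ _, h ▸ Set.diff_subset⟩
      · obtain ⟨b', hb', hcb'⟩ := hin c h
        exact ⟨b', Finset.mem_insert_of_mem hb', hcb'⟩
    · rw [Finset.coe_insert]
      rw [Set.pairwise_insert_of_symmetric]
      refine ⟨hpw, fun y hy _ => ?_⟩
      exact Set.disjoint_sdiff_left.mono_right (Set.subset_sUnion_of_mem hy)
    · rw [Finset.coe_insert, Set.sUnion_insert, Set.diff_union_self,
        Finset.coe_insert, Set.sUnion_insert, hun]

lemma aux_refine {s : Set ℕ} {ψ : Set ℕ → ℝ} (hψ : IsSubmeasureOn s ψ) (k r : ℝ) (hr : 0 ≤ r)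
    (B : Finset (Set ℕ)) (hsub : ∀ b ∈ B, b ⊆ s) (hk : ∀ b ∈ B, ψ b ≤ k)
    (hgt : r < ψ (⋃₀ (↑B : Set (Set ℕ)))) :
    ∃ B' : Finset (Set ℕ), B'.card ≤ B.card ∧ (∀ b ∈ B', b ⊆ s) ∧
      ((↑B' : Set (Set ℕ)).Pairwise fun x y => Disjoint x y) ∧
      (∀ b ∈ B', 0 < ψ b ∧ ψ b ≤ k) ∧
      r < ψ (⋃₀ (↑B' : Set (Set ℕ))) ∧ ψ (⋃₀ (↑B' : Set (Set ℕ))) ≤ r + k := by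
  obtain ⟨C, hcard, hin, hpw, hun⟩ := aux_disjointify B
  have hCsub : ∀ c ∈ C, c ⊆ s := by
    intro c hc
    obtain ⟨b, hb, hcb⟩ := hin c hc
    exact hcb.trans (hsub b hb)
  have hCk : ∀ c ∈ C, ψ c ≤ k := by
    intro c hc
    obtain ⟨b, hb, hcb⟩ := hin c hc
    exact (hψ.2.2.1 c b hcb (hsub b hb)).trans (hk b hb)
  obtain ⟨B', hB'C, hpos, hgt', hle'⟩ := aux_trim hψ k r hr C hCsub hCk (hun ▸ hgt)
  refine ⟨B', (Finset.card_le_card hB'C).trans hcard,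
    fun b hb => hCsub b (hB'C hb), hpw.mono (Finset.coe_subset.mpr hB'C),
    fun b hb => ⟨hpos b hb, hCk b (hB'C hb)⟩, hgt', hle'⟩


end AuxNGF
/-- Characterization of fragmented, not gradually fragmented ideals: if `I = I⟨a_j, φ_j⟩`
is fragmented but not gradually fragmented, then there are `k < ω`, a sequence `⟨C_i⟩` of
pairwise disjoint infinite subsets of `ω` and a sequence `⟨l_i⟩` of natural numbers such
that for every `i` and every `j ∈ C_i` there is a pairwise disjoint family `B_j` of
subsets of `a_j` with `|B_j| = l_i`, `0 < φ_j(b) ≤ k` for every `b ∈ B_j`, and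
`i < φ_j(⋃ B_j) ≤ i + k`. -/
theorem not_gradually_fragmented_char
    (a : ℕ → Set ℕ) (φ : ℕ → Set ℕ → ℝ) (I : Set (Set ℕ))
    (hfrag : IsFragmentation I a φ)
    (hnotgrad : ¬ GraduallyFragmented a φ) :
    ∃ k : ℕ, ∃ C : ℕ → Set ℕ, ∃ l : ℕ → ℕ,
      (∀ i, (C i).Infinite) ∧
      (∀ i i', i ≠ i' → Disjoint (C i) (C i')) ∧
      ∀ i : ℕ, ∀ j ∈ C i, ∃ B : Finset (Set ℕ),
        (∀ b ∈ B, b ⊆ a j) ∧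
        ((↑B : Set (Set ℕ)).Pairwise fun x y => Disjoint x y) ∧
        B.card = l i ∧
        (∀ b ∈ B, 0 < φ j b ∧ φ j b ≤ (k : ℝ)) ∧
        (i : ℝ) < φ j (⋃₀ (↑B : Set (Set ℕ))) ∧
        φ j (⋃₀ (↑B : Set (Set ℕ))) ≤ (i : ℝ) + (k : ℝ) := by
  classical
  obtain ⟨hpart, hsm, hmem⟩ := hfrag
  unfold GraduallyFragmented at hnotgrad
  push_neg at hnotgrad
  obtain ⟨k, hk⟩ := hnotgrad
  choose l₀ hl₀ using hk
  -- T i c : set of j admitting a good family of card exactly c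
  set T : ℕ → ℕ → Set ℕ := fun i c => {j | ∃ B : Finset (Set ℕ),
    (∀ b ∈ B, b ⊆ a j) ∧
    ((↑B : Set (Set ℕ)).Pairwise fun x y => Disjoint x y) ∧
    B.card = c ∧
    (∀ b ∈ B, 0 < φ j b ∧ φ j b ≤ (k : ℝ)) ∧
    (i : ℝ) < φ j (⋃₀ (↑B : Set (Set ℕ))) ∧
    φ j (⋃₀ (↑B : Set (Set ℕ))) ≤ (i : ℝ) + (k : ℝ)} with hT
  have hEx : ∀ i : ℕ, ∃ c : ℕ, (T i c).Infinite := by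
    intro i
    by_contra hcon
    push_neg at hcon
    have hfreq := hl₀ i
    have hinf := Nat.frequently_atTop_iff_infinite.mp hfreq
    have hsubset : {j | ¬ ∀ B : Finset (Set ℕ), (∀ b ∈ B, b ⊆ a j) → B.card ≤ l₀ i →
        (∀ b ∈ B, φ j b ≤ (k : ℝ)) → φ j (⋃₀ (↑B : Set (Set ℕ))) ≤ (i : ℝ)}
        ⊆ ⋃ c ∈ Finset.range (l₀ i + 1), T i c := by
      intro j hj
      simp only [Set.mem_setOf_eq] at hj
      push_neg at hj
      obtain ⟨B, hBsub, hBcard, hBk, hBgt⟩ := hj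
      obtain ⟨B', hcard', hsub', hpw', hbds', hgt', hle'⟩ :=
        aux_refine (hsm j) (k : ℝ) (i : ℝ) (Nat.cast_nonneg i) B hBsub hBk hBgt
      refine Set.mem_iUnion.mpr ⟨B'.card, Set.mem_iUnion.mpr
        ⟨Finset.mem_range.mpr (by omega), ?_⟩⟩
      exact ⟨B', hsub', hpw', rfl, hbds', hgt', hle'⟩
    have hfin : (⋃ c ∈ Finset.range (l₀ i + 1), T i c).Finite :=
      Set.Finite.biUnion (Finset.range (l₀ i + 1)).finite_toSet (fun c _ => hcon c)
    exact hinf (hfin.subset (fun j hj => hsubset (by simp only [Set.mem_setOf_eq] at hj ⊢; push_neg; exact hj)))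
  choose l hl using hEx
  -- build the pairwise disjoint infinite sets
  have hpick : ∀ i b : ℕ, ∃ x ∈ T i (l i), b < x := fun i b => (hl i).exists_gt b
  choose pk hpk1 hpk2 using hpick
  let g : ℕ → ℕ := fun n =>
    Nat.rec (pk (Nat.unpair 0).1 0) (fun n gn => pk (Nat.unpair (n + 1)).1 gn) n
  have hgmem : ∀ n, g n ∈ T (Nat.unpair n).1 (l (Nat.unpair n).1) := by
    intro n
    cases n with
    | zero => exact hpk1 _ _
    | succ m => exact hpk1 _ _
  have hgmono : StrictMono g := by
    apply strictMono_nat_of_lt_succ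
    intro n
    exact hpk2 (Nat.unpair (n + 1)).1 (g n)
  refine ⟨k, fun i => Set.range (fun m => g (Nat.pair i m)), l, ?_, ?_, ?_⟩
  · intro i
    apply Set.infinite_range_of_injective
    intro m m' h
    have h2 := hgmono.injective h
    have h3 := congrArg (fun x => (Nat.unpair x).2) h2
    simpa [Nat.unpair_pair] using h3
  · intro i i' hii'
    rw [Set.disjoint_left]
    rintro x ⟨m, rfl⟩ ⟨m', hm'⟩
    have h2 := hgmono.injective hm'
    have h3 := congrArg (fun x => (Nat.unpair x).1) h2
    simp only [Nat.unpair_pair] at h3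
    exact hii' h3.symm
  · rintro i j ⟨m, rfl⟩
    have := hgmem (Nat.pair i m)
    rw [Nat.unpair_pair] at this
    exact this
end

section
/- Let I = I⟨a_i,φ_i⟩ be a fragmented ideal. The following are equivalent: (i) I is tall; (ii) there exists k < ω such that φ_i({j}) ≤ k for every i < ω and every j ∈ a_i; (iii) for every m < ω there exists l > m such that for every i < ω and every x ⊆ a_i with φ_i(x) > m there is x' ⊆ x with m < φ_i(x') ≤ l; (iv) the statement of (iii) for m = 0; (v) there exists m < ω for which the statement of (iii) holds. -/
open Set Filter Cardinal

-- (2) → (1)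
lemma frag_tall_of_bdd (a : ℕ → Set ℕ) (φ : ℕ → Set ℕ → ℝ) (I : Set (Set ℕ))
    (hfrag : IsFragmentation I a φ) (k : ℕ)
    (hk : ∀ i : ℕ, ∀ j ∈ a i, φ i {j} ≤ (k : ℝ)) : IsTall I := by
  obtain ⟨⟨hne, hfin, hdisj, huniv⟩, hsub, hmem⟩ := hfrag
  intro Y _ hYinf
  classical
  set S : Set ℕ := {i | (Y ∩ a i).Nonempty} with hS
  have hSinf : S.Infinite := by
    intro hSfin
    apply hYinf
    have : Y ⊆ ⋃ i ∈ S, a i := by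
      intro y hy
      have : y ∈ ⋃ i, a i := by rw [huniv]; trivial
      obtain ⟨i, hi⟩ := Set.mem_iUnion.mp this
      exact Set.mem_biUnion (⟨y, hy, hi⟩ : (Y ∩ a i).Nonempty) hi
    exact (Set.Finite.biUnion hSfin (fun i _ => hfin i)).subset this
  set g : ℕ → ℕ := fun i => if h : (Y ∩ a i).Nonempty then h.some else 0 with hg
  have hgmem : ∀ i ∈ S, g i ∈ Y ∩ a i := by
    intro i hi
    have hi' : (Y ∩ a i).Nonempty := hi
    simp only [hg, dif_pos hi']
    exact hi'.some_mem
  have hinj : Set.InjOn g S := by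
    intro i hi i' hi' hii
    by_contra hne'
    exact (hdisj i i' hne').ne_of_mem (hgmem i hi).2 (hii ▸ (hgmem i' hi').2) rfl
  refine ⟨g '' S, ?_, (Set.infinite_image_iff hinj).mpr hSinf, ?_⟩
  · rintro _ ⟨i, hi, rfl⟩; exact (hgmem i hi).1
  · rw [hmem]
    refine ⟨(k : ℝ), fun i => ?_⟩
    by_cases hi : i ∈ S
    · have hsubs : g '' S ∩ a i ⊆ {g i} := by
        rintro n ⟨⟨i', hi', rfl⟩, hn2⟩
        have : i' = i := by
          by_contra hne'
          exact (hdisj i' i hne').ne_of_mem (hgmem i' hi').2 hn2 rfl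
        simp [this]
      calc φ i (g '' S ∩ a i) ≤ φ i {g i} :=
            (hsub i).2.2.1 _ _ hsubs (Set.singleton_subset_iff.mpr (hgmem i hi).2)
        _ ≤ (k : ℝ) := hk i _ (hgmem i hi).2
    · have : g '' S ∩ a i = ∅ := by
        rw [Set.eq_empty_iff_forall_notMem]
        rintro n ⟨⟨i', hi', rfl⟩, hn2⟩
        have : i' = i := by
          by_contra hne'
          exact (hdisj i' i hne').ne_of_mem (hgmem i' hi').2 hn2 rfl
        exact hi (this ▸ hi')
      rw [this, (hsub i).1]
      exact Nat.cast_nonneg k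

-- (1) → (2)
lemma frag_bdd_of_tall (a : ℕ → Set ℕ) (φ : ℕ → Set ℕ → ℝ) (I : Set (Set ℕ))
    (hfrag : IsFragmentation I a φ) (htall : IsTall I) :
    ∃ k : ℕ, ∀ i : ℕ, ∀ j ∈ a i, φ i {j} ≤ (k : ℝ) := by
  obtain ⟨⟨hne, hfin, hdisj, huniv⟩, hsub, hmem⟩ := hfrag
  classical
  by_contra hcon
  push_neg at hcon
  -- index function
  have hidx0 : ∀ j : ℕ, ∃ i, j ∈ a i := by
    intro j
    have : j ∈ ⋃ i, a i := by rw [huniv]; trivial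
    exact Set.mem_iUnion.mp this
  choose idx hidx using hidx0
  have hidxu : ∀ i j, j ∈ a i → i = idx j := by
    intro i j hj
    by_contra hne'
    exact (hdisj i (idx j) hne').ne_of_mem hj (hidx j) rfl
  set v : ℕ → ℝ := fun j => φ (idx j) {j} with hv
  have hvb : ∀ k : ℕ, ∃ j, (k : ℝ) < v j := by
    intro k
    obtain ⟨i, j, hj, hk⟩ := hcon k
    exact ⟨j, by rw [hv]; rw [hidxu i j hj] at hk; exact hk⟩
  set B : ℕ → Set ℕ := fun n => {j | (n : ℝ) < v j} with hB
  have hBinf : ∀ n, (B n).Infinite := by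
    intro n hf
    obtain ⟨j0, hj0⟩ := hvb n
    have hne' : hf.toFinset.Nonempty := ⟨j0, hf.mem_toFinset.mpr hj0⟩
    set M : ℝ := hf.toFinset.sup' hne' v with hM
    obtain ⟨j, hj⟩ := hvb (max n ⌈M⌉₊)
    have hc1 : ((n : ℕ) : ℝ) ≤ ((max n ⌈M⌉₊ : ℕ) : ℝ) := by
      exact_mod_cast le_max_left n ⌈M⌉₊
    have hc2 : ((⌈M⌉₊ : ℕ) : ℝ) ≤ ((max n ⌈M⌉₊ : ℕ) : ℝ) := by
      exact_mod_cast le_max_right n ⌈M⌉₊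
    have hjB : j ∈ B n := by
      rw [hB]; simp only [Set.mem_setOf_eq]
      linarith
    have hle : v j ≤ M := Finset.le_sup' v (hf.mem_toFinset.mpr hjB)
    have hceil : M ≤ (⌈M⌉₊ : ℝ) := Nat.le_ceil M
    linarith
  have hBex : ∀ n m : ℕ, ∃ j, j ∈ B n ∧ m < j := by
    intro n m
    obtain ⟨b, hb, hmb⟩ := (hBinf n).exists_gt m
    exact ⟨b, hb, hmb⟩
  choose F hF1 hF2 using hBex
  set f : ℕ → ℕ := fun n => Nat.rec (F 0 0) (fun k fk => F (k + 1) fk) n with hf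
  have hfs : ∀ n, f (n + 1) = F (n + 1) (f n) := fun n => rfl
  have hfB : ∀ n, f n ∈ B n := by
    intro n
    cases n with
    | zero => exact hF1 0 0
    | succ k => rw [hfs]; exact hF1 _ _
  have hmono : StrictMono f := strictMono_nat_of_lt_succ (fun n => by rw [hfs]; exact hF2 _ _)
  obtain ⟨Z, hZY, hZinf, hZI⟩ := htall (Set.range f) (Set.subset_univ _)
    (Set.infinite_range_of_injective hmono.injective)
  obtain ⟨K, hK⟩ := (hmem Z).mp hZI
  set S : Set ℕ := f ⁻¹' Z with hSdef
  have hSinf : S.Infinite := by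
    intro hSfin
    apply hZinf
    have : Z ⊆ f '' S := by
      intro z hz
      obtain ⟨n, rfl⟩ := hZY hz
      exact ⟨n, hz, rfl⟩
    exact (hSfin.image f).subset this
  obtain ⟨n, hnS, hn⟩ := hSinf.exists_gt ⌈K⌉₊
  have hfn : f n ∈ Z := hnS
  have hvn : (n : ℝ) < v (f n) := hfB n
  have hone : φ (idx (f n)) {f n} ≤ φ (idx (f n)) (Z ∩ a (idx (f n))) :=
    (hsub _).2.2.1 _ _ (by
      rw [Set.singleton_subset_iff]; exact ⟨hfn, hidx (f n)⟩) (Set.inter_subset_right)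
  have h1 : (n : ℝ) < K := lt_of_lt_of_le hvn (le_trans hone (hK _))
  have h2 : K ≤ (⌈K⌉₊ : ℝ) := Nat.le_ceil K
  have h3 : ((⌈K⌉₊ : ℕ) : ℝ) < (n : ℝ) := by exact_mod_cast hn
  linarith

-- (2) → (3)
lemma frag_two_three (a : ℕ → Set ℕ) (φ : ℕ → Set ℕ → ℝ)
    (hpart : IsPartitionFin a) (hsub : ∀ i, IsSubmeasureOn (a i) (φ i)) (k : ℕ)
    (hk : ∀ i : ℕ, ∀ j ∈ a i, φ i {j} ≤ (k : ℝ)) :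
    ∀ m : ℕ, ∃ l : ℕ, m < l ∧ ∀ i : ℕ, ∀ x : Set ℕ, x ⊆ a i → (m : ℝ) < φ i x →
      ∃ x' : Set ℕ, x' ⊆ x ∧ (m : ℝ) < φ i x' ∧ φ i x' ≤ (l : ℝ) := by
  classical
  intro m
  refine ⟨m + k + 1, by omega, fun i x hxa hmx => ?_⟩
  have hxfin : x.Finite := (hpart.2.1 i).subset hxa
  set s : Finset ℕ := hxfin.toFinset with hs
  have hsx : (s : Set ℕ) = x := hxfin.coe_toFinset
  set T : Finset (Finset ℕ) := s.powerset.filter (fun t => (m : ℝ) < φ i (↑t)) with hT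
  have hsT : s ∈ T := by
    rw [hT, Finset.mem_filter]
    exact ⟨Finset.mem_powerset_self s, by rw [hsx]; exact hmx⟩
  obtain ⟨t, htT, htmin⟩ := T.exists_min_image Finset.card ⟨s, hsT⟩
  rw [hT, Finset.mem_filter, Finset.mem_powerset] at htT
  obtain ⟨hts, htφ⟩ := htT
  have htsub : (↑t : Set ℕ) ⊆ x := by rw [← hsx]; exact_mod_cast hts
  have htsuba : (↑t : Set ℕ) ⊆ a i := htsub.trans hxa
  have htne : t.Nonempty := by
    rcases t.eq_empty_or_nonempty with rfl | h
    · exfalso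
      have : φ i (↑(∅ : Finset ℕ)) = 0 := by
        rw [Finset.coe_empty]; exact (hsub i).1
      rw [this] at htφ
      have : (0 : ℝ) ≤ (m : ℝ) := Nat.cast_nonneg m
      linarith
    · exact h
  obtain ⟨j, hj⟩ := htne
  have herase : t.erase j ∉ T := by
    intro hmem'
    have := htmin _ hmem'
    have hc : (t.erase j).card < t.card := Finset.card_erase_lt_of_mem hj
    omega
  have herase2 : ¬ ((m : ℝ) < φ i (↑(t.erase j))) := by
    intro h
    exact herase (by
      rw [hT, Finset.mem_filter, Finset.mem_powerset]
      exact ⟨(Finset.erase_subset j t).trans hts, h⟩)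
  push_neg at herase2
  have hins : (↑t : Set ℕ) = (↑(t.erase j) : Set ℕ) ∪ {j} := by
    rw [← Finset.insert_erase hj]
    push_cast
    rw [Set.insert_eq, Set.union_comm]
    simp [Finset.insert_erase hj]
  have hja : j ∈ a i := htsuba (by exact_mod_cast hj)
  have hbound : φ i (↑t) ≤ (m : ℝ) + (k : ℝ) := by
    calc φ i (↑t) = φ i ((↑(t.erase j) : Set ℕ) ∪ {j}) := by rw [← hins]
      _ ≤ φ i (↑(t.erase j)) + φ i {j} := (hsub i).2.2.2 _ _
          (((Finset.coe_subset.mpr (Finset.erase_subset j t)).trans htsuba))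
          (Set.singleton_subset_iff.mpr hja)
      _ ≤ (m : ℝ) + (k : ℝ) := add_le_add herase2 (hk i j hja)
  exact ⟨↑t, htsub, htφ, by push_cast; linarith⟩

-- (5) → (2)
lemma frag_five_two (a : ℕ → Set ℕ) (φ : ℕ → Set ℕ → ℝ)
    (hsub : ∀ i, IsSubmeasureOn (a i) (φ i)) (m l : ℕ) (hml : m < l)
    (H : ∀ i : ℕ, ∀ x : Set ℕ, x ⊆ a i → (m : ℝ) < φ i x →
      ∃ x' : Set ℕ, x' ⊆ x ∧ (m : ℝ) < φ i x' ∧ φ i x' ≤ (l : ℝ)) :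
    ∃ k : ℕ, ∀ i : ℕ, ∀ j ∈ a i, φ i {j} ≤ (k : ℝ) := by
  refine ⟨l, fun i j hj => ?_⟩
  by_cases h : (m : ℝ) < φ i {j}
  · obtain ⟨x', hx'1, hx'2, hx'3⟩ := H i {j} (Set.singleton_subset_iff.mpr hj) h
    rcases Set.subset_singleton_iff_eq.mp hx'1 with rfl | rfl
    · rw [(hsub i).1] at hx'2
      have : (0 : ℝ) ≤ (m : ℝ) := Nat.cast_nonneg m
      linarith
    · exact hx'3
  · push_neg at h
    calc φ i {j} ≤ (m : ℝ) := h
      _ ≤ (l : ℝ) := Nat.cast_le.mpr hml.le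

/-- For a fragmented ideal `I = I⟨a_i, φ_i⟩` the following are equivalent:
(i) `I` is tall;
(ii) there is `k` with `φ_i({j}) ≤ k` for every `i` and `j ∈ a_i`;
(iii) for every `m` there is `l > m` such that for every `i` and `x ⊆ a_i` with
`φ_i(x) > m` there is `x' ⊆ x` with `m < φ_i(x') ≤ l`;
(iv) statement (iii) for `m = 0`;
(v) statement (iii) for some `m`. -/
theorem tall_fragmented_tfae
    (a : ℕ → Set ℕ) (φ : ℕ → Set ℕ → ℝ) (I : Set (Set ℕ))
    (hfrag : IsFragmentation I a φ) :
    List.TFAE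
      [ IsTall I,
        ∃ k : ℕ, ∀ i : ℕ, ∀ j ∈ a i, φ i {j} ≤ (k : ℝ),
        ∀ m : ℕ, ∃ l : ℕ, m < l ∧ ∀ i : ℕ, ∀ x : Set ℕ, x ⊆ a i → (m : ℝ) < φ i x →
          ∃ x' : Set ℕ, x' ⊆ x ∧ (m : ℝ) < φ i x' ∧ φ i x' ≤ (l : ℝ),
        ∃ l : ℕ, 0 < l ∧ ∀ i : ℕ, ∀ x : Set ℕ, x ⊆ a i → (0 : ℝ) < φ i x →
          ∃ x' : Set ℕ, x' ⊆ x ∧ (0 : ℝ) < φ i x' ∧ φ i x' ≤ (l : ℝ),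
        ∃ m : ℕ, ∃ l : ℕ, m < l ∧ ∀ i : ℕ, ∀ x : Set ℕ, x ⊆ a i → (m : ℝ) < φ i x →
          ∃ x' : Set ℕ, x' ⊆ x ∧ (m : ℝ) < φ i x' ∧ φ i x' ≤ (l : ℝ) ] := by
  tfae_have 2 → 1 := fun ⟨k, hk⟩ => frag_tall_of_bdd a φ I hfrag k hk
  tfae_have 1 → 2 := fun h => frag_bdd_of_tall a φ I hfrag h
  tfae_have 2 → 3 := fun ⟨k, hk⟩ => frag_two_three a φ hfrag.1 hfrag.2.1 k hk
  tfae_have 3 → 4 := fun h => by simpa using h 0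
  tfae_have 4 → 5 := fun ⟨l, hl, H⟩ => ⟨0, l, hl, by simpa using H⟩
  tfae_have 5 → 2 := fun ⟨m, l, hml, H⟩ => frag_five_two a φ hfrag.2.1 m l hml H
  tfae_finish
end

section
/- Every non-trivial tall fragmented ideal on ω is not a P-ideal: if I = I⟨a_i,φ_i⟩ is fragmented, tall, and ω ∉ I, then there is a countable family {x^k : k < ω} ⊆ I such that no y ∈ I satisfies x^k ⊆* y for all k < ω. -/
open Set Filter Cardinal

/-- Greedy lemma: in a submeasure space where singletons have measure at most `K₀`,
any target value `t` below the measure of a finite set is attained within `[t, t + K₀]`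
by some subset. -/
lemma greedy_exists {s : Set ℕ} {φ : Set ℕ → ℝ} (hs : IsSubmeasureOn s φ)
    {K₀ : ℝ} (hK₀ : 0 < K₀) (hsing : ∀ x ∈ s, φ {x} ≤ K₀) :
    ∀ b : Finset ℕ, ↑b ⊆ s → ∀ t : ℝ, 0 ≤ t → t ≤ φ ↑b →
      ∃ c : Set ℕ, c ⊆ s ∧ t ≤ φ c ∧ φ c ≤ t + K₀ := by
  intro b
  induction b using Finset.strongInduction with
  | _ b ih =>
    intro hbs t ht0 ht
    by_cases hub : φ ↑b ≤ t + K₀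
    · exact ⟨↑b, hbs, ht, hub⟩
    · push_neg at hub
      have hbne : b.Nonempty := by
        rcases Finset.eq_empty_or_nonempty b with h | h
        · subst h
          simp only [Finset.coe_empty] at ht hub
          rw [hs.1] at ht hub; linarith
        · exact h
      obtain ⟨x, hx⟩ := hbne
      have hxs : x ∈ s := hbs (by exact_mod_cast hx)
      have hcoe : (↑b : Set ℕ) = ↑(b.erase x) ∪ {x} := by
        rw [Finset.coe_erase, Set.diff_union_self,
          Set.union_eq_self_of_subset_right (Set.singleton_subset_iff.mpr (by exact_mod_cast hx))]
      have hsub1 : (↑(b.erase x) : Set ℕ) ⊆ s :=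
        Set.Subset.trans (by exact_mod_cast Finset.coe_subset.mpr (Finset.erase_subset x b)) hbs
      have hadd : φ ↑b ≤ φ ↑(b.erase x) + φ {x} := by
        rw [hcoe]
        exact hs.2.2.2 _ _ hsub1 (Set.singleton_subset_iff.mpr hxs)
      have hx1 : φ {x} ≤ K₀ := hsing x hxs
      have ht' : t ≤ φ ↑(b.erase x) := by linarith
      exact ih (b.erase x) (Finset.erase_ssubset hx) hsub1 t ht0 ht'

/-- Every non-trivial tall fragmented ideal is not a P-ideal: if `I = I⟨a_i, φ_i⟩` is
fragmented, tall and `ω ∉ I`, then there is a countable family `{x^k : k < ω} ⊆ I` such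
that no `y ∈ I` satisfies `x^k ⊆* y` for all `k`. -/
theorem tall_fragmented_not_Pideal
    (a : ℕ → Set ℕ) (φ : ℕ → Set ℕ → ℝ) (I : Set (Set ℕ))
    (hfrag : IsFragmentation I a φ)
    (htall : IsTall I)
    (hnontriv : Set.univ ∉ I) :
    ∃ x : ℕ → Set ℕ, (∀ k, x k ∈ I) ∧ ¬ ∃ y ∈ I, ∀ k, (x k \ y).Finite := by
  obtain ⟨⟨hne, hfin, hdisj, hcov⟩, hsub, hmem⟩ := hfrag
  -- Step 1: tallness gives an eventual uniform bound on singleton measures.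
  have hsingbd : ∃ K₀ : ℝ, 0 < K₀ ∧ ∃ N : ℕ, ∀ i, N ≤ i → ∀ x ∈ a i, φ i {x} ≤ K₀ := by
    suffices h : ∃ K : ℝ, ∃ N : ℕ, ∀ i, N ≤ i → ∀ x ∈ a i, φ i {x} ≤ K by
      obtain ⟨K, N, hK⟩ := h
      exact ⟨max K 1, lt_of_lt_of_le one_pos (le_max_right _ _), N,
        fun i hi x hx => (hK i hi x hx).trans (le_max_left _ _)⟩
    by_contra h
    push_neg at h
    -- h : ∀ K N, ∃ i, N ≤ i ∧ ∃ x ∈ a i, K < φ i {x}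
    choose G hG p hpa hpφ using h
    -- build an increasing sequence of indices with heavy singletons
    let j : ℕ → ℕ := fun n => Nat.rec (G 0 0) (fun m ih => G ((m : ℝ) + 1) (ih + 1)) n
    have hj0 : j 0 = G 0 0 := rfl
    have hjs : ∀ n, j (n + 1) = G ((n : ℝ) + 1) (j n + 1) := fun n => rfl
    have hjmono : StrictMono j := by
      apply strictMono_nat_of_lt_succ
      intro n
      have := hG ((n : ℝ) + 1) (j n + 1)
      rw [hjs n]; omega
    let q : ℕ → ℕ := fun n => Nat.rec (p 0 0) (fun m _ => p ((m : ℝ) + 1) (j m + 1)) n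
    have hqa : ∀ n, q n ∈ a (j n) := by
      intro n
      cases n with
      | zero => exact hpa 0 0
      | succ m => exact hpa ((m : ℝ) + 1) (j m + 1)
    have hqφ : ∀ n : ℕ, (n : ℝ) < φ (j n) {q n} := by
      intro n
      cases n with
      | zero => exact_mod_cast hpφ 0 0
      | succ m =>
        have := hpφ ((m : ℝ) + 1) (j m + 1)
        push_cast
        exact this
    have hqinj : Function.Injective q := by
      intro m n hmn
      by_contra hne'
      have hjne : j m ≠ j n := fun h => hne' (hjmono.injective h)
      have h1 := hqa m
      have h2 := hqa n
      rw [hmn] at h1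
      exact Set.disjoint_left.mp (hdisj _ _ hjne) h1 h2
    have hXinf : (Set.range q).Infinite := Set.infinite_range_of_injective hqinj
    obtain ⟨Z, hZsub, hZinf, hZI⟩ := htall (Set.range q) (Set.subset_univ _) hXinf
    obtain ⟨K, hK⟩ := (hmem Z).mp hZI
    have hSinf : (q ⁻¹' Z).Infinite := by
      intro hSfin
      have : Z ⊆ q '' (q ⁻¹' Z) := by
        intro z hz
        obtain ⟨n, rfl⟩ := hZsub hz
        exact ⟨n, hz, rfl⟩
      exact hZinf ((hSfin.image q).subset this)
    have : ∃ n ∈ q ⁻¹' Z, ⌈K⌉₊ < n := by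
      by_contra hc
      push_neg at hc
      exact hSinf ((Set.finite_Iic ⌈K⌉₊).subset hc)
    obtain ⟨n, hnZ, hnK⟩ := this
    have hKn : K < (n : ℝ) := lt_of_le_of_lt (Nat.le_ceil K) (by exact_mod_cast hnK)
    have hmonoφ : φ (j n) {q n} ≤ φ (j n) (Z ∩ a (j n)) :=
      (hsub (j n)).2.2.1 _ _ (Set.singleton_subset_iff.mpr ⟨hnZ, hqa n⟩)
        Set.inter_subset_right
    have := hK (j n)
    have := hqφ n
    linarith
  obtain ⟨K₀, hK₀, N, hsing⟩ := hsingbd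
  -- Step 2: non-triviality gives indices (beyond any point) with large total measure.
  have hub : ∀ (M : ℕ) (r : ℝ), ∃ j, M ≤ j ∧ r ≤ φ j (a j) := by
    intro M r
    have h1 : ∀ K : ℝ, ∃ i, K < φ i (a i) := by
      intro K
      by_contra hc
      push_neg at hc
      exact hnontriv ((hmem Set.univ).mpr ⟨K, fun i => by
        simpa [Set.univ_inter] using hc i⟩)
    obtain ⟨j, hj⟩ := h1 (max r (∑ m ∈ Finset.range M, |φ m (a m)|))
    refine ⟨j, ?_, le_of_lt (lt_of_le_of_lt (le_max_left _ _) hj)⟩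
    by_contra hjM
    push_neg at hjM
    have h2 : φ j (a j) ≤ ∑ m ∈ Finset.range M, |φ m (a m)| :=
      le_trans (le_abs_self _)
        (Finset.single_le_sum (f := fun m => |φ m (a m)|) (fun m _ => abs_nonneg _)
          (Finset.mem_range.mpr hjM))
    have := lt_of_le_of_lt (h2.trans (le_max_right r _)) hj
    exact lt_irrefl _ this
  choose F hF1 hF2 using hub
  let i : ℕ → ℕ := fun n => Nat.rec (F N 0) (fun m ih => F (ih + 1) ((m : ℝ) + 1)) n
  have hi0 : i 0 = F N 0 := rfl
  have his : ∀ n, i (n + 1) = F (i n + 1) ((n : ℝ) + 1) := fun n => rfl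
  have himono : StrictMono i := by
    apply strictMono_nat_of_lt_succ
    intro n
    have := hF1 (i n + 1) ((n : ℝ) + 1)
    rw [his n]; omega
  have hiN : ∀ n, N ≤ i n := by
    intro n
    have h0 : N ≤ i 0 := hF1 N 0
    exact h0.trans (himono.monotone (Nat.zero_le n))
  have hiφ : ∀ n : ℕ, (n : ℝ) ≤ φ (i n) (a (i n)) := by
    intro n
    cases n with
    | zero => simpa [hi0] using hF2 N 0
    | succ m =>
      have := hF2 (i m + 1) ((m : ℝ) + 1)
      rw [his m]
      push_cast
      exact this
  -- Step 3: for each k, choose in each block a subset with measure roughly k·K₀.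
  have hB : ∀ k n : ℕ, ∃ b : Set ℕ, b ⊆ a (i n) ∧ φ (i n) b ≤ (k : ℝ) * K₀ + K₀ ∧
      ((k : ℝ) * K₀ ≤ φ (i n) (a (i n)) → (k : ℝ) * K₀ ≤ φ (i n) b) := by
    intro k n
    by_cases hc : (k : ℝ) * K₀ ≤ φ (i n) (a (i n))
    · obtain ⟨c, hcs, hc1, hc2⟩ :=
        greedy_exists (hsub (i n)) hK₀ (fun x hx => hsing (i n) (hiN n) x hx)
          (hfin (i n)).toFinset (by simp) ((k : ℝ) * K₀)
          (mul_nonneg (Nat.cast_nonneg k) hK₀.le)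
          (by rwa [Set.Finite.coe_toFinset])
      exact ⟨c, hcs, hc2, fun _ => hc1⟩
    · push_neg at hc
      exact ⟨a (i n), subset_rfl, by linarith, fun h => absurd h (not_le.mpr hc)⟩
  choose B hB1 hB2 hB3 using hB
  refine ⟨fun k => ⋃ n, B k n, ?_, ?_⟩
  · -- each x k belongs to I
    intro k
    rw [hmem]
    refine ⟨(k : ℝ) * K₀ + K₀, fun l => ?_⟩
    show φ l ((⋃ n, B k n) ∩ a l) ≤ (k : ℝ) * K₀ + K₀
    rcases Classical.em (∃ n, i n = l) with hl | hl
    · obtain ⟨n, rfl⟩ := hl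
      have heq : (⋃ m, B k m) ∩ a (i n) = B k n := by
        apply Set.Subset.antisymm
        · rintro u ⟨hu, hua⟩
          rw [Set.mem_iUnion] at hu
          obtain ⟨m, hm⟩ := hu
          by_cases hmn : m = n
          · subst hmn; exact hm
          · have hine : i m ≠ i n := fun h => hmn (himono.injective h)
            exact absurd hua (Set.disjoint_left.mp (hdisj _ _ hine) (hB1 k m hm))
        · exact Set.subset_inter (Set.subset_iUnion _ n) (hB1 k n)
      rw [heq]
      exact hB2 k n
    · have heq : (⋃ m, B k m) ∩ a l = ∅ := by
        rw [Set.eq_empty_iff_forall_notMem]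
        rintro u ⟨hu, hua⟩
        rw [Set.mem_iUnion] at hu
        obtain ⟨m, hm⟩ := hu
        refine hl ⟨m, ?_⟩
        by_contra hne'
        exact Set.disjoint_left.mp (hdisj _ _ hne') (hB1 k m hm) hua
      rw [heq, (hsub l).1]
      have : 0 ≤ (k : ℝ) * K₀ := mul_nonneg (Nat.cast_nonneg k) hK₀.le
      linarith
  · -- no pseudo-union
    rintro ⟨y, hy, hys⟩
    obtain ⟨K, hK⟩ := (hmem y).mp hy
    obtain ⟨k, hk⟩ := exists_nat_gt (K / K₀)
    have hKk : K < (k : ℝ) * K₀ := by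
      rw [div_lt_iff₀ hK₀] at hk
      linarith
    set S := {n : ℕ | (B k n \ y).Nonempty} with hSdef
    have hS : S.Finite := by
      by_contra hSinf
      have hSinf : S.Infinite := hSinf
      have hpt : ∀ n, ∃ u : ℕ, n ∈ S → u ∈ B k n \ y := by
        intro n
        by_cases h : n ∈ S
        · obtain ⟨u, hu⟩ := h
          exact ⟨u, fun _ => hu⟩
        · exact ⟨0, fun h' => absurd h' h⟩
      choose pt hpt using hpt
      have hinj : Set.InjOn pt S := by
        intro m hm n hn hmn
        by_contra hne'
        have h1 : pt m ∈ a (i m) := hB1 k m (hpt m hm).1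
        have h2 : pt n ∈ a (i n) := hB1 k n (hpt n hn).1
        rw [hmn] at h1
        have hine : i m ≠ i n := fun h => hne' (himono.injective h)
        exact Set.disjoint_left.mp (hdisj _ _ hine) h1 h2
      have himg : pt '' S ⊆ (⋃ n, B k n) \ y := by
        rintro u ⟨n, hn, rfl⟩
        exact ⟨Set.mem_iUnion.mpr ⟨n, (hpt n hn).1⟩, (hpt n hn).2⟩
      exact (hSinf.image hinj) (((hys k).subset) himg)
    set T := {n : ℕ | φ (i n) (a (i n)) < (k : ℝ) * K₀} with hTdef
    have hT : T.Finite := by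
      apply (Set.finite_Iio ⌈(k : ℝ) * K₀⌉₊).subset
      intro n hn
      have : (n : ℝ) < (k : ℝ) * K₀ := lt_of_le_of_lt (hiφ n) hn
      exact Nat.lt_ceil.mpr this
    obtain ⟨n, hn⟩ := ((hS.union hT).infinite_compl).nonempty
    rw [Set.mem_compl_iff, Set.mem_union, not_or] at hn
    obtain ⟨hnS, hnT⟩ := hn
    have hBy : B k n ⊆ y :=
      Set.diff_eq_empty.mp (Set.not_nonempty_iff_eq_empty.mp hnS)
    have hφa : (k : ℝ) * K₀ ≤ φ (i n) (a (i n)) := not_lt.mp hnT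
    have hφB : (k : ℝ) * K₀ ≤ φ (i n) (B k n) := hB3 k n hφa
    have hmono' : φ (i n) (B k n) ≤ φ (i n) (y ∩ a (i n)) :=
      (hsub (i n)).2.2.1 _ _ (Set.subset_inter hBy (hB1 k n)) Set.inter_subset_right
    have := hK (i n)
    linarith
end

section
/- If I is a nowhere tall fragmented ideal on ω, then I is gradually fragmented (witnessed by a fragmentation into singletons) and I is one of the following: (i) I = {x ⊆ ω : x ⊆* A} for some A ⊆ ω, or (ii) I is the ideal generated by some infinite partition of ω into infinite sets together with the finite sets. -/
open Set Filter Cardinal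

open Classical in
noncomputable def singMeasure (g : ℕ → ℕ) (i : ℕ) (x : Set ℕ) : ℝ :=
  if i ∈ x then (g i : ℝ) else 0

/-- If `I` is a nowhere tall fragmented ideal on `ω`, then `I` admits a fragmentation
into singletons which is gradually fragmented, and `I` is either of the form
`{x : x ⊆* A}` for some `A ⊆ ω`, or the ideal generated by an infinite partition of `ω`
into infinite sets (together with the finite sets). -/
theorem nowhere_tall_fragmented_char
    (a : ℕ → Set ℕ) (φ : ℕ → Set ℕ → ℝ) (I : Set (Set ℕ))
    (hfrag : IsFragmentation I a φ)
    (hnt : NowhereTall I) :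
    (∃ ψ : ℕ → Set ℕ → ℝ,
      IsFragmentation I (fun i => {i}) ψ ∧ GraduallyFragmented (fun i => {i}) ψ) ∧
    ((∃ A : Set ℕ, I = {x : Set ℕ | (x \ A).Finite}) ∨
     (∃ P : ℕ → Set ℕ,
        (∀ n, (P n).Infinite) ∧
        (∀ n m, n ≠ m → Disjoint (P n) (P m)) ∧
        (⋃ n, P n) = Set.univ ∧
        I = {x : Set ℕ | ∃ F : Finset ℕ, (x \ ⋃ n ∈ F, P n).Finite})) := by
  obtain ⟨⟨hne, hfin, hdisj, hcover⟩, hsub, hmem⟩ := hfrag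
  classical
  have hex : ∀ n : ℕ, ∃ i, n ∈ a i := by
    intro n
    have : n ∈ ⋃ i, a i := hcover ▸ mem_univ n
    simpa using this
  choose idx hidx using hex
  have huniq : ∀ n i, n ∈ a i → idx n = i := by
    intro n i hn
    by_contra h
    exact (hdisj _ _ h).le_bot ⟨hidx n, hn⟩ |>.elim
  set c : ℕ → ℝ := fun n => φ (idx n) {n} with hcdef
  have hsing : ∀ n, ({n} : Set ℕ) ⊆ a (idx n) := by
    intro n m hm; rw [mem_singleton_iff] at hm; subst hm; exact hidx m
  have hc0 : ∀ n, 0 ≤ c n := fun n => (hsub (idx n)).2.1 {n} (hsing n)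
  set g : ℕ → ℕ := fun n => ⌈c n⌉₊ with hgdef
  have hmono : ∀ i (x y : Set ℕ), x ⊆ y → y ⊆ a i → φ i x ≤ φ i y :=
    fun i x y hxy hy => (hsub i).2.2.1 x y hxy hy
  -- subset closure of I
  have hIsub : ∀ x y : Set ℕ, x ⊆ y → y ∈ I → x ∈ I := by
    intro x y hxy hy
    obtain ⟨K, hK⟩ := (hmem y).1 hy
    refine (hmem x).2 ⟨K, fun i => le_trans ?_ (hK i)⟩
    exact hmono i _ _ (inter_subset_inter_left _ hxy) inter_subset_right
  -- c is bounded on members of I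
  have hcb : ∀ x ∈ I, ∃ K : ℝ, ∀ n ∈ x, c n ≤ K := by
    intro x hx
    obtain ⟨K, hK⟩ := (hmem x).1 hx
    refine ⟨K, fun n hn => ?_⟩
    calc c n ≤ φ (idx n) (x ∩ a (idx n)) := by
          refine hmono _ _ _ ?_ inter_subset_right
          intro m hm; rw [mem_singleton_iff] at hm; subst hm
          exact ⟨hn, hidx m⟩
      _ ≤ K := hK (idx n)
  -- key lemma: sets on which c is bounded belong to I
  have hA : ∀ K : ℝ, {n : ℕ | c n ≤ K} ∈ I := by
    intro K
    by_contra hAK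
    apply hnt
    refine ⟨{n | c n ≤ K}, hAK, ?_⟩
    intro Y hY hYinf
    have hK0 : (0:ℝ) ≤ K := by
      obtain ⟨n, hn⟩ := hYinf.nonempty
      exact le_trans (hc0 n) (hY hn)
    set Z : Set ℕ := {n | n ∈ Y ∧ n = sInf (Y ∩ a (idx n))} with hZdef
    have hZY : Z ⊆ Y := fun n hn => hn.1
    have hZsub : ∀ i, ∀ n ∈ Z ∩ a i, Z ∩ a i = {n} := by
      intro i n hn
      have hin : idx n = i := huniq n i hn.2
      apply Subset.antisymm
      · intro m hm
        have him : idx m = i := huniq m i hm.2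
        have h1 : n = sInf (Y ∩ a i) := by have := hn.1.2; rwa [hin] at this
        have h2 : m = sInf (Y ∩ a i) := by have := hm.1.2; rwa [him] at this
        rw [mem_singleton_iff, h2, h1]
      · intro m hm; rw [mem_singleton_iff] at hm; subst hm; exact hn
    have hbound : ∀ i, φ i (Z ∩ a i) ≤ K := by
      intro i
      rcases eq_empty_or_nonempty (Z ∩ a i) with h | ⟨n, hn⟩
      · rw [h, (hsub i).1]; exact hK0
      · rw [hZsub i n hn]
        have hin : idx n = i := huniq n i hn.2
        have : φ i {n} = c n := by show φ i {n} = φ (idx n) {n}; rw [hin]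
        rw [this]
        exact hY (hZY hn.1)
    have hSinf : {i : ℕ | (Y ∩ a i).Nonempty}.Infinite := by
      by_contra h
      rw [Set.not_infinite] at h
      have hsubY : Y ⊆ ⋃ i ∈ {i : ℕ | (Y ∩ a i).Nonempty}, a i := by
        intro n hn
        exact mem_biUnion (show (Y ∩ a (idx n)).Nonempty from ⟨n, hn, hidx n⟩) (hidx n)
      exact hYinf ((h.biUnion (fun i _ => hfin i)).subset hsubY)
    have hZinf : Z.Infinite := by
      have hmaps : ∀ i ∈ {i : ℕ | (Y ∩ a i).Nonempty}, sInf (Y ∩ a i) ∈ Z := by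
        intro i hi
        have hmem' : sInf (Y ∩ a i) ∈ Y ∩ a i := Nat.sInf_mem hi
        have hid : idx (sInf (Y ∩ a i)) = i := huniq _ _ hmem'.2
        exact ⟨hmem'.1, by rw [hid]⟩
      have hinj : InjOn (fun i => sInf (Y ∩ a i)) {i : ℕ | (Y ∩ a i).Nonempty} := by
        intro i hi j hj hij
        have h1 : sInf (Y ∩ a i) ∈ a i := (Nat.sInf_mem hi).2
        have h2 : sInf (Y ∩ a j) ∈ a j := (Nat.sInf_mem hj).2
        by_contra hne'
        exact (hdisj i j hne').le_bot ⟨h1, by rw [show sInf (Y ∩ a i) = sInf (Y ∩ a j) from hij]; exact h2⟩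
      exact (hSinf.image hinj).mono (image_subset_iff.2 hmaps)
    exact ⟨Z, hZY, hZinf, (hmem Z).2 ⟨K, hbound⟩⟩
  -- master characterization of I via g
  have hchar : ∀ x : Set ℕ, x ∈ I ↔ ∃ K : ℕ, ∀ n ∈ x, g n ≤ K := by
    intro x
    constructor
    · intro hx
      obtain ⟨K, hK⟩ := hcb x hx
      exact ⟨⌈K⌉₊, fun n hn => Nat.ceil_le_ceil (hK n hn)⟩
    · rintro ⟨K, hK⟩
      refine hIsub x {n | c n ≤ (K:ℝ)} ?_ (hA K)
      intro n hn
      have h1 : c n ≤ (g n : ℝ) := Nat.le_ceil _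
      have h2 : (g n : ℝ) ≤ (K : ℝ) := by exact_mod_cast hK n hn
      exact le_trans h1 h2
  -- finite sets: g bounded
  have hfinI : ∀ x : Set ℕ, x.Finite → ∃ K : ℕ, ∀ n ∈ x, g n ≤ K := by
    intro x hx
    obtain ⟨K, hK⟩ := (hx.image g).bddAbove
    exact ⟨K, fun n hn => hK (mem_image_of_mem g hn)⟩
  constructor
  · -- Part 1: singleton fragmentation, gradually fragmented
    refine ⟨singMeasure g, ⟨?_, ?_, ?_⟩, ?_⟩
    · exact ⟨fun i => ⟨i, rfl⟩, fun i => finite_singleton i,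
        fun i j h => by simpa using h, Set.iUnion_of_singleton ℕ⟩
    · intro i
      refine ⟨by simp [singMeasure], ?_, ?_, ?_⟩
      · intro x _; simp only [singMeasure]; split <;> positivity
      · intro x y hxy _
        simp only [singMeasure]
        by_cases hx : i ∈ x
        · rw [if_pos hx, if_pos (hxy hx)]
        · rw [if_neg hx]; split <;> positivity
      · intro x y _ _
        simp only [singMeasure]
        by_cases hx : i ∈ x
        · rw [if_pos hx, if_pos (mem_union_left y hx)]
          have : (0:ℝ) ≤ if i ∈ y then (g i : ℝ) else 0 := by split <;> positivity
          linarith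
        · by_cases hy : i ∈ y
          · rw [if_neg hx, if_pos hy, if_pos (mem_union_right x hy)]
            linarith
          · rw [if_neg hx, if_neg hy, if_neg (show ¬ i ∈ x ∪ y by rw [mem_union]; simp [hx, hy])]
            linarith
    · intro x
      rw [hchar x]
      constructor
      · rintro ⟨K, hK⟩
        refine ⟨(K:ℝ), fun i => ?_⟩
        simp only [singMeasure]
        by_cases hx : i ∈ x ∩ {i}
        · rw [if_pos hx]; exact_mod_cast hK i hx.1
        · rw [if_neg hx]; positivity
      · rintro ⟨K, hK⟩
        refine ⟨⌈K⌉₊, fun n hn => ?_⟩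
        have := hK n
        simp only [singMeasure] at this
        rw [if_pos (mem_inter hn rfl : n ∈ x ∩ ({n} : Set ℕ))] at this
        have h2 : (g n : ℝ) ≤ (⌈K⌉₊ : ℝ) := le_trans this (Nat.le_ceil K)
        exact_mod_cast h2
    · intro k
      refine ⟨k, fun l => Eventually.of_forall fun i => ?_⟩
      intro B _ _ hBle
      simp only [singMeasure] at hBle ⊢
      by_cases h : i ∈ ⋃₀ (↑B : Set (Set ℕ))
      · rw [if_pos h]
        obtain ⟨b, hb, hib⟩ := h
        have := hBle b hb
        rw [if_pos hib] at this
        exact this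
      · rw [if_neg h]; positivity
  · -- Part 2: dichotomy
    by_cases hT : {K : ℕ | (g ⁻¹' {K}).Infinite}.Finite
    · left
      obtain ⟨K0, hK0⟩ := hT.bddAbove
      refine ⟨{n | g n ≤ K0}, ?_⟩
      ext x
      simp only [mem_setOf_eq]
      constructor
      · intro hx
        obtain ⟨K, hK⟩ := (hchar x).1 hx
        have hsubfin : (x \ {n | g n ≤ K0}) ⊆ ⋃ j ∈ Finset.Ioc K0 K, g ⁻¹' {j} := by
          rintro n ⟨hnx, hn⟩
          simp only [mem_setOf_eq] at hn
          simp only [mem_iUnion]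
          exact ⟨g n, Finset.mem_Ioc.2 ⟨lt_of_not_ge hn, hK n hnx⟩, rfl⟩
        refine Set.Finite.subset ?_ hsubfin
        refine Set.Finite.biUnion (Finset.Ioc K0 K).finite_toSet ?_
        intro j hj
        rw [Finset.mem_coe, Finset.mem_Ioc] at hj
        by_contra hinf
        exact absurd (hK0 (show j ∈ {K : ℕ | (g ⁻¹' {K}).Infinite} from hinf)) (not_le.2 hj.1)
      · intro hxf
        apply (hchar x).2
        obtain ⟨K1, hK1⟩ := hfinI _ hxf
        refine ⟨max K0 K1, fun n hn => ?_⟩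
        by_cases hn0 : g n ≤ K0
        · exact le_trans hn0 (le_max_left _ _)
        · exact le_trans (hK1 n ⟨hn, hn0⟩) (le_max_right _ _)
    · right
      have hT' : {K : ℕ | (g ⁻¹' {K}).Infinite}.Infinite := hT
      set e : ℕ → ℕ := fun n => Nat.nth (fun K => (g ⁻¹' {K}).Infinite) n with hedef
      have hee : ∀ n, (g ⁻¹' {e n}).Infinite := fun n => Nat.nth_mem_of_infinite hT' n
      have hemono : StrictMono e := Nat.nth_strictMono hT'
      have hen : ∀ n, n ≤ e n := fun n => hemono.le_apply
      set l : ℕ → ℕ := fun n => match n with | 0 => 0 | n+1 => e n + 1 with hldef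
      set P : ℕ → Set ℕ := fun n => g ⁻¹' Set.Icc (l n) (e n) with hPdef
      have hmemP : ∀ n m, m ∈ P n ↔ l n ≤ g m ∧ g m ≤ e n := by
        intro n m; rw [hPdef]; rfl
      have hle : ∀ n, l n ≤ e n := by
        intro n
        cases n with
        | zero => exact Nat.zero_le _
        | succ m => exact hemono (Nat.lt_succ_self m)
      have hPinf : ∀ n, (P n).Infinite := by
        intro n
        refine (hee n).mono ?_
        intro m hm
        rw [mem_preimage, mem_singleton_iff] at hm
        rw [hmemP]
        rw [hm]
        exact ⟨hle n, le_refl _⟩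
      have hdisjP : ∀ n m, n ≠ m → Disjoint (P n) (P m) := by
        have key : ∀ n m, n < m → Disjoint (P n) (P m) := by
          intro n m hnm
          rw [Set.disjoint_left]
          intro x hx hx'
          rw [hmemP] at hx hx'
          have hlt : e n < l m := by
            cases m with
            | zero => omega
            | succ m' =>
              have h1 : e n ≤ e m' := hemono.monotone (Nat.lt_succ_iff.1 hnm)
              have h2 : l (m'+1) = e m' + 1 := rfl
              omega
          omega
        intro n m h
        rcases h.lt_or_gt with h | h
        · exact key n m h
        · exact (key m n h).symm
      have hcover' : ∀ N m, g m ≤ e N → m ∈ ⋃ n ∈ Finset.range (N+1), P n := by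
        intro N
        induction N with
        | zero =>
          intro m hm
          simp only [mem_iUnion]
          exact ⟨0, by simp, (hmemP 0 m).2 ⟨Nat.zero_le _, hm⟩⟩
        | succ N ih =>
          intro m hm
          by_cases h : g m ≤ e N
          · have := ih m h
            simp only [mem_iUnion, Finset.mem_range] at this ⊢
            obtain ⟨n, hn, hmn⟩ := this
            exact ⟨n, by omega, hmn⟩
          · have h2 : l (N+1) = e N + 1 := rfl
            simp only [mem_iUnion]
            exact ⟨N+1, by simp, (hmemP (N+1) m).2 ⟨by omega, hm⟩⟩
      have hunion : (⋃ n, P n) = Set.univ := by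
        ext m
        simp only [mem_iUnion, mem_univ, iff_true]
        have := hcover' (g m) m (hen (g m))
        simp only [mem_iUnion] at this
        obtain ⟨n, _, hn⟩ := this
        exact ⟨n, hn⟩
      refine ⟨P, hPinf, hdisjP, hunion, ?_⟩
      ext x
      simp only [mem_setOf_eq]
      constructor
      · intro hx
        obtain ⟨K, hK⟩ := (hchar x).1 hx
        refine ⟨Finset.range (K+1), ?_⟩
        have hempty : x \ ⋃ n ∈ Finset.range (K+1), P n = ∅ := by
          rw [diff_eq_empty]
          intro m hm
          exact hcover' K m (le_trans (hK m hm) (hen K))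
        rw [hempty]
        exact finite_empty
      · rintro ⟨F, hF⟩
        apply (hchar x).2
        obtain ⟨K1, hK1⟩ := hfinI _ hF
        have hM : ∀ n ∈ F, n ≤ F.sup id := fun n hn => Finset.le_sup (f := id) hn
        refine ⟨max (e (F.sup id)) K1, fun m hm => ?_⟩
        by_cases h : m ∈ ⋃ n ∈ F, P n
        · simp only [mem_iUnion] at h
          obtain ⟨n, hnF, hmP⟩ := h
          rw [hmemP] at hmP
          exact le_trans (le_trans hmP.2 (hemono.monotone (hM n hnF))) (le_max_left _ _)
        · exact le_trans (hK1 m ⟨hm, h⟩) (le_max_right _ _)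
end

section
/- Let I = I⟨a_i,φ_i⟩ be a fragmented ideal and let Î be the fragmented ideal obtained from countably many copies of I. Then: (a) if I is nowhere tall, then Î is nowhere tall; (b) if I is somewhere tall, then Î is not gradually fragmented. -/
open Set Filter Cardinal

section Aux

lemma aux_infinite_meets (b : ℕ → Set ℕ) (hfin : ∀ i, (b i).Finite)
    (Y : Set ℕ) (hY : Y ⊆ ⋃ i, b i) (hinf : Y.Infinite) :
    {i | (Y ∩ b i).Nonempty}.Infinite := by
  by_contra hfin'
  rw [Set.not_infinite] at hfin'
  apply hinf
  have hsub : Y ⊆ ⋃ i ∈ {i | (Y ∩ b i).Nonempty}, b i := by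
    intro y hy
    obtain ⟨i, hi⟩ := Set.mem_iUnion.mp (hY hy)
    exact Set.mem_biUnion ⟨y, hy, hi⟩ hi
  exact (Set.Finite.biUnion hfin' (fun i _ => hfin i)).subset hsub

lemma aux_infinite_union (p : ℕ → Set ℕ)
    (hdisj : ∀ i j, i ≠ j → Disjoint (p i) (p j))
    (hT : {i | (p i).Nonempty}.Infinite) : (⋃ i, p i).Infinite := by
  classical
  set f : ℕ → ℕ := fun i => if h : (p i).Nonempty then h.choose else 0 with hf
  have hmem : ∀ i ∈ {i | (p i).Nonempty}, f i ∈ p i := by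
    intro i hi
    have : f i = hi.choose := dif_pos hi
    rw [this]
    exact hi.choose_spec
  have hinj : Set.InjOn f {i | (p i).Nonempty} := by
    intro i hi j hj hij
    by_contra hne
    exact (hdisj i j hne).ne_of_mem (hmem i hi) (hmem j hj) hij
  apply (hT.image hinj).mono
  rintro _ ⟨i, hi, rfl⟩
  exact Set.mem_iUnion.mpr ⟨i, hmem i hi⟩

lemma aux_iUnion_inter (w c : ℕ → Set ℕ) (hw : ∀ i, w i ⊆ c i)
    (hdisj : ∀ i j, i ≠ j → Disjoint (c i) (c j)) (i : ℕ) :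
    (⋃ i', w i') ∩ c i = w i := by
  ext x
  constructor
  · rintro ⟨hx1, hx2⟩
    obtain ⟨i', hi'⟩ := Set.mem_iUnion.mp hx1
    rcases eq_or_ne i' i with rfl | hne
    · exact hi'
    · exact absurd rfl ((hdisj i' i hne).ne_of_mem (hw i' hi') hx2)
  · exact fun hx => ⟨Set.mem_iUnion.mpr ⟨i, hx⟩, hw i hx⟩

end Aux

/-- Let `I = I⟨a_i, φ_i⟩` be a fragmented ideal and let `Î` be the fragmented ideal
obtained from countably many copies of `I`: it is determined by a partition
`{a_{i,j} : i,j < ω}` of `ω` into nonempty finite sets (enumerated via `Nat.unpair`)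
with `|a_{i,j}| = |a_i|`, where `h_{i,j}` is the (unique) strictly increasing bijection
from `a_{i,j}` onto `a_i` and `φ_{i,j}(x) = φ_i(h_{i,j}[x])`.
Then (a) if `I` is nowhere tall, so is `Î`; and (b) if `I` is somewhere tall, then `Î`
is not gradually fragmented. -/
theorem copies_of_fragmented_ideal
    (a : ℕ → Set ℕ) (φ : ℕ → Set ℕ → ℝ) (I : Set (Set ℕ))
    (hfrag : IsFragmentation I a φ)
    (a2 : ℕ → ℕ → Set ℕ) (h : ℕ → ℕ → ℕ → ℕ)
    (hbij : ∀ i j, Set.BijOn (h i j) (a2 i j) (a i))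
    (hmono : ∀ i j, StrictMonoOn (h i j) (a2 i j))
    (hcard : ∀ i j, (a2 i j).ncard = (a i).ncard)
    (Ihat : Set (Set ℕ))
    (hfrag2 : IsFragmentation Ihat
      (fun n => a2 (Nat.unpair n).1 (Nat.unpair n).2)
      (fun n x => φ (Nat.unpair n).1 ((h (Nat.unpair n).1 (Nat.unpair n).2) '' x))) :
    (NowhereTall I → NowhereTall Ihat) ∧
    (SomewhereTall I →
      ¬ GraduallyFragmented (fun n => a2 (Nat.unpair n).1 (Nat.unpair n).2)
        (fun n x => φ (Nat.unpair n).1 ((h (Nat.unpair n).1 (Nat.unpair n).2) '' x))) := by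
  classical
  have hafin : ∀ i, (a i).Finite := hfrag.1.2.1
  have hadisj : ∀ i i', i ≠ i' → Disjoint (a i) (a i') := hfrag.1.2.2.1
  have hmonoφ : ∀ i, ∀ x y, x ⊆ y → y ⊆ a i → φ i x ≤ φ i y :=
    fun i => (hfrag.2.1 i).2.2.1
  constructor
  · -- part (a)
    intro hnt hst
    apply hnt
    obtain ⟨X, hXpos, hXtall⟩ := hst
    -- choose one copy per column, nearly achieving the sup
    set v : ℕ → ℕ → ℝ := fun i j' => φ i (h i j' '' (X ∩ a2 i j')) with hv
    have hbdd : ∀ i j', v i j' ≤ φ i (a i) := by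
      intro i j'
      apply hmonoφ i _ _ _ subset_rfl
      rw [← (hbij i j').image_eq]
      exact Set.image_mono Set.inter_subset_right
    have hbddA : ∀ i, BddAbove (Set.range (v i)) := by
      intro i
      exact ⟨φ i (a i), by rintro _ ⟨j', rfl⟩; exact hbdd i j'⟩
    have hsel : ∀ i, ∃ j', sSup (Set.range (v i)) - 1 < v i j' := by
      intro i
      obtain ⟨b, ⟨j', rfl⟩, hb⟩ := exists_lt_of_lt_csSup (Set.range_nonempty (v i))
        (by linarith : sSup (Set.range (v i)) - 1 < sSup (Set.range (v i)))
      exact ⟨j', hb⟩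
    choose j hj using hsel
    set c2 : ℕ → Set ℕ := fun i => a2 i (j i) with hc2
    set hh : ℕ → ℕ → ℕ := fun i => h i (j i) with hhh
    set w : ℕ → Set ℕ := fun i => hh i '' (X ∩ c2 i) with hw
    have hpairne : ∀ i i' : ℕ, i ≠ i' → Nat.pair i (j i) ≠ Nat.pair i' (j i') := by
      intro i i' hne he
      apply hne
      have := congrArg (fun n => (Nat.unpair n).1) he
      simpa [Nat.unpair_pair] using this
    have hc2disj : ∀ i i', i ≠ i' → Disjoint (c2 i) (c2 i') := by
      intro i i' hne
      have := hfrag2.1.2.2.1 (Nat.pair i (j i)) (Nat.pair i' (j i')) (hpairne i i' hne)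
      simpa [Nat.unpair_pair] using this
    have hc2fin : ∀ i, (c2 i).Finite := by
      intro i
      have := hfrag2.1.2.1 (Nat.pair i (j i))
      simpa [Nat.unpair_pair] using this
    have hwsub : ∀ i, w i ⊆ a i := by
      intro i
      rw [← (hbij i (j i)).image_eq]
      exact Set.image_mono Set.inter_subset_right
    have hX'a : ∀ i, (⋃ i', w i') ∩ a i = w i := aux_iUnion_inter w a hwsub hadisj
    set X' : Set ℕ := ⋃ i, w i with hX'
    have hvw : ∀ i, v i (j i) = φ i (w i) := fun i => rfl
    have hX'pos : X' ∉ I := by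
      intro hmem
      obtain ⟨K, hK⟩ := (hfrag.2.2 X').mp hmem
      apply hXpos
      rw [hfrag2.2.2]
      refine ⟨K + 1, fun n => ?_⟩
      show v (Nat.unpair n).1 (Nat.unpair n).2 ≤ K + 1
      have h1 : v (Nat.unpair n).1 (Nat.unpair n).2 ≤ sSup (Set.range (v (Nat.unpair n).1)) :=
        le_csSup (hbddA _) ⟨_, rfl⟩
      have h2 := hj (Nat.unpair n).1
      have h3 := hK (Nat.unpair n).1
      rw [hX'a, ← hvw] at h3
      linarith
    refine ⟨X', hX'pos, ?_⟩
    intro Y hYX' hYinf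
    set p : ℕ → Set ℕ := fun i => c2 i ∩ hh i ⁻¹' Y with hp
    set Y' : Set ℕ := ⋃ i, p i with hY'
    have hY'X : Y' ⊆ X := by
      intro z hz
      obtain ⟨i, hza2, hzY⟩ := Set.mem_iUnion.mp hz
      have h1 : hh i z ∈ X' ∩ a i := ⟨hYX' hzY, (hbij i (j i)).mapsTo hza2⟩
      rw [hX'a] at h1
      obtain ⟨z', hz'X, hz'eq⟩ := h1
      have : z' = z := (hbij i (j i)).injOn hz'X.2 hza2 hz'eq
      rw [← this]
      exact hz'X.1
    have hY'inf : Y'.Infinite := by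
      have hYsub : Y ⊆ ⋃ i, a i := by
        rw [hfrag.1.2.2.2]; exact Set.subset_univ Y
      have hT := aux_infinite_meets a hafin Y hYsub hYinf
      apply aux_infinite_union p (fun i i' hne =>
        ((hc2disj i i' hne).mono Set.inter_subset_left Set.inter_subset_left))
      apply hT.mono
      intro i hi
      obtain ⟨y, hyY, hya⟩ := hi
      have hmem : y ∈ X' ∩ a i := ⟨hYX' hyY, hya⟩
      rw [hX'a] at hmem
      obtain ⟨z, hzX, rfl⟩ := hmem
      exact ⟨z, hzX.2, hyY⟩
    obtain ⟨Z', hZ'Y', hZ'inf, hZ'I⟩ := hXtall Y' hY'X hY'inf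
    obtain ⟨K, hK⟩ := (hfrag2.2.2 Z').mp hZ'I
    set q : ℕ → Set ℕ := fun i => hh i '' (Z' ∩ c2 i) with hq
    have hqsub : ∀ i, q i ⊆ a i := by
      intro i
      rw [← (hbij i (j i)).image_eq]
      exact Set.image_mono Set.inter_subset_right
    have hY'p : ∀ i, Y' ∩ c2 i = p i :=
      aux_iUnion_inter p c2 (fun i => Set.inter_subset_left) hc2disj
    refine ⟨⋃ i, q i, ?_, ?_, ?_⟩
    · rintro z hz
      obtain ⟨i, y, hy, rfl⟩ := Set.mem_iUnion.mp hz
      have hmem : y ∈ Y' ∩ c2 i := ⟨hZ'Y' hy.1, hy.2⟩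
      rw [hY'p] at hmem
      exact hmem.2
    · have hZ'sub : Z' ⊆ ⋃ i, c2 i := by
        intro z hz
        obtain ⟨i, hi⟩ := Set.mem_iUnion.mp (hZ'Y' hz)
        exact Set.mem_iUnion.mpr ⟨i, hi.1⟩
      have hT' := aux_infinite_meets c2 hc2fin Z' hZ'sub hZ'inf
      apply aux_infinite_union q (fun i i' hne =>
        ((hadisj i i' hne).mono (hqsub i) (hqsub i')))
      apply hT'.mono
      rintro i ⟨z, hz⟩
      exact ⟨hh i z, ⟨z, hz, rfl⟩⟩
    · rw [hfrag.2.2]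
      refine ⟨K, fun i => ?_⟩
      have h1 := hK (Nat.pair i (j i))
      simp only [Nat.unpair_pair] at h1
      have h2 : (⋃ i', q i') ∩ a i = q i := aux_iUnion_inter q a hqsub hadisj i
      rw [h2]
      exact h1
  · -- part (b)
    rintro ⟨X, hXpos, hXtall⟩ gf
    -- Step 1: uniform gradual fragmentation per column
    have ugf : ∀ k : ℕ, ∃ m : ℕ, ∀ (i : ℕ) (B : Finset (Set ℕ)),
        (∀ b ∈ B, b ⊆ a i) → (∀ b ∈ B, φ i b ≤ (k : ℝ)) →
        φ i (⋃₀ (↑B : Set (Set ℕ))) ≤ (m : ℝ) := by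
      intro k
      obtain ⟨m, hm⟩ := gf k
      refine ⟨m, fun i B hBsub hBsmall => ?_⟩
      obtain ⟨N, hN⟩ := Filter.eventually_atTop.mp (hm B.card)
      have hcond := hN (Nat.pair i N) (Nat.right_le_pair i N)
      simp only [Nat.unpair_pair] at hcond
      set f : Set ℕ → Set ℕ := fun b => a2 i N ∩ h i N ⁻¹' b with hfdef
      have key : ∀ b ∈ B, h i N '' f b = b := by
        intro b hb
        rw [hfdef]
        simp only
        rw [Set.image_inter_preimage, (hbij i N).image_eq,
          Set.inter_eq_right.mpr (hBsub b hb)]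
      have hc := hcond (B.image f)
        (by
          intro b hb
          obtain ⟨b0, _, rfl⟩ := Finset.mem_image.mp hb
          exact Set.inter_subset_left)
        (Finset.card_image_le)
        (by
          intro b hb
          obtain ⟨b0, hb0, rfl⟩ := Finset.mem_image.mp hb
          rw [key b0 hb0]
          exact hBsmall b0 hb0)
      have himg : h i N '' (⋃₀ (↑(B.image f) : Set (Set ℕ))) = ⋃₀ (↑B : Set (Set ℕ)) := by
        rw [Finset.coe_image, Set.sUnion_image, Set.image_iUnion₂]
        rw [show ⋃ b ∈ (↑B : Set (Set ℕ)), h i N '' f b = ⋃ b ∈ (↑B : Set (Set ℕ)), b from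
          Set.iUnion₂_congr (fun b hb => key b hb), ← Set.sUnion_eq_biUnion]
      rw [himg] at hc
      exact hc
    -- unboundedness of X
    have hXun : ∀ K : ℝ, ∃ i, K < φ i (X ∩ a i) := by
      intro K
      by_contra hcon
      push_neg at hcon
      exact hXpos ((hfrag.2.2 X).mpr ⟨K, hcon⟩)
    -- Step 2: heavy points avoiding finitely many columns
    have step2 : ∀ (k : ℕ) (F : Finset ℕ), ∃ i, i ∉ F ∧ ∃ x, x ∈ X ∩ a i ∧ (k : ℝ) < φ i {x} := by
      intro k F
      obtain ⟨m, hm⟩ := ugf k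
      obtain ⟨i, hi⟩ := hXun ((m : ℝ) + ∑ i' ∈ F, |φ i' (X ∩ a i')|)
      have hsum : (0:ℝ) ≤ ∑ i' ∈ F, |φ i' (X ∩ a i')| :=
        Finset.sum_nonneg (fun _ _ => abs_nonneg _)
      have hiF : i ∉ F := by
        intro hiF
        have h1 : φ i (X ∩ a i) ≤ ∑ i' ∈ F, |φ i' (X ∩ a i')| :=
          (le_abs_self _).trans (Finset.single_le_sum (f := fun i' => |φ i' (X ∩ a i')|) (fun _ _ => abs_nonneg _) hiF)
        have h2 : (0:ℝ) ≤ (m:ℝ) := Nat.cast_nonneg m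
        linarith
      refine ⟨i, hiF, ?_⟩
      by_contra hcon
      push_neg at hcon
      have hXa : (X ∩ a i).Finite := (hafin i).subset Set.inter_subset_right
      set B : Finset (Set ℕ) := hXa.toFinset.image (fun x => ({x} : Set ℕ)) with hB
      have h1 : φ i (⋃₀ (↑B : Set (Set ℕ))) ≤ (m : ℝ) := by
        apply hm i B
        · intro b hb
          obtain ⟨x, hx, rfl⟩ := Finset.mem_image.mp hb
          rw [Set.Finite.mem_toFinset] at hx
          exact Set.singleton_subset_iff.mpr hx.2
        · intro b hb
          obtain ⟨x, hx, rfl⟩ := Finset.mem_image.mp hb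
          rw [Set.Finite.mem_toFinset] at hx
          exact hcon x hx
      have hBU : ⋃₀ (↑B : Set (Set ℕ)) = X ∩ a i := by
        ext x
        simp [hB, Set.Finite.mem_toFinset]
      rw [hBU] at h1
      linarith
    -- Step 3: build a sequence of heavy points in distinct columns
    choose fI hI1 fx hx1 hx2 using step2
    set G : ℕ → Finset ℕ := fun t => Nat.rec ∅ (fun t' Gt => insert (fI t' Gt) Gt) t with hG
    have hGsucc : ∀ t, G (t + 1) = insert (fI t (G t)) (G t) := fun t => rfl
    set bi : ℕ → ℕ := fun t => fI t (G t) with hbi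
    set pt : ℕ → ℕ := fun t => fx t (G t) with hpt
    have hGmono : ∀ s t, s ≤ t → G s ⊆ G t := by
      intro s t hst
      induction t with
      | zero => rw [Nat.le_zero.mp hst]
      | succ t ih =>
        rcases Nat.le_succ_iff.mp hst with h' | h'
        · exact (ih h').trans (by rw [hGsucc]; exact Finset.subset_insert _ _)
        · rw [h']
    have hbimem : ∀ t, bi t ∈ G (t + 1) := by
      intro t; rw [hGsucc]; exact Finset.mem_insert_self _ _
    have hbinot : ∀ t, bi t ∉ G t := fun t => hI1 t (G t)
    have hbiinj : Function.Injective bi := by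
      intro s t hst
      by_contra hne
      rcases Nat.lt_or_ge s t with hlt | hge
      · have hmem : bi s ∈ G t := hGmono (s + 1) t hlt (hbimem s)
        rw [hst] at hmem
        exact hbinot t hmem
      · have hlt : t < s := lt_of_le_of_ne hge (fun he => hne he.symm)
        have hmem : bi t ∈ G s := hGmono (t + 1) s hlt (hbimem t)
        rw [← hst] at hmem
        exact hbinot s hmem
    have hptXa : ∀ t, pt t ∈ X ∩ a (bi t) := fun t => hx1 t (G t)
    have hptinj : Function.Injective pt := by
      intro s t hst
      by_contra hne
      have hd := hadisj (bi s) (bi t) (fun he => hne (hbiinj he))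
      exact hd.ne_of_mem (hptXa s).2 (hptXa t).2 hst
    obtain ⟨Z, hZY, hZinf, hZI⟩ := hXtall (Set.range pt)
      (by rintro _ ⟨t, rfl⟩; exact (hptXa t).1)
      (Set.infinite_range_of_injective hptinj)
    obtain ⟨K, hK⟩ := (hfrag.2.2 Z).mp hZI
    have hpre : (pt ⁻¹' Z).Infinite := by
      by_contra hfin
      rw [Set.not_infinite] at hfin
      apply hZinf
      apply (hfin.image pt).subset
      intro z hz
      obtain ⟨t, rfl⟩ := hZY hz
      exact ⟨t, hz, rfl⟩
    obtain ⟨t, htZ, htK⟩ := hpre.exists_gt ⌈K⌉₊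
    have h1 : φ (bi t) (Z ∩ a (bi t)) ≤ K := hK (bi t)
    have h2 : φ (bi t) {pt t} ≤ φ (bi t) (Z ∩ a (bi t)) :=
      hmonoφ (bi t) _ _ (Set.singleton_subset_iff.mpr ⟨htZ, (hptXa t).2⟩)
        Set.inter_subset_right
    have h3 : K < (t : ℝ) := lt_of_le_of_lt (Nat.le_ceil K) (by exact_mod_cast htK)
    have h4 : (t : ℝ) < φ (bi t) {pt t} := hx2 t (G t)
    linarith
end

section
/- If I is a non-trivial nowhere tall fragmented ideal on ω, then the Rothberger number 𝔟(I) equals the unbounding number 𝔟. -/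
open Set Filter Cardinal

section auxGap
-- the set whose sInf is 𝔟
lemma bSet_nonempty : {c | ∃ F : Set (ℕ → ℕ), #F = c ∧
    ∀ g : ℕ → ℕ, ∃ f ∈ F, ¬ ∀ᶠ i in atTop, f i ≤ g i}.Nonempty := by
  refine ⟨#(Set.univ : Set (ℕ → ℕ)), Set.univ, rfl, fun g => ⟨fun i => g i + 1, mem_univ _, ?_⟩⟩
  rw [eventually_atTop]
  rintro ⟨N, hN⟩
  simp only [Nat.add_one_le_iff] at hN
  exact absurd (hN N le_rfl) (lt_irrefl _)

lemma exists_unbounded_family : ∃ F : Set (ℕ → ℕ), #F = unboundingNumber ∧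
    ∀ g : ℕ → ℕ, ∃ f ∈ F, ¬ ∀ᶠ i in atTop, f i ≤ g i := by
  have := csInf_mem bSet_nonempty
  obtain ⟨F, hF1, hF2⟩ := this
  exact ⟨F, hF1, hF2⟩

lemma unboundingNumber_le {F : Set (ℕ → ℕ)}
    (h : ∀ g : ℕ → ℕ, ∃ f ∈ F, ¬ ∀ᶠ i in atTop, f i ≤ g i) :
    unboundingNumber ≤ #F :=
  csInf_le (OrderBot.bddBelow _) ⟨F, rfl, h⟩

variable {I : Set (Set ℕ)} {e : ℕ → ℕ}

-- finite sets are in I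
lemma finite_mem (hI : ∀ x : Set ℕ, x ∈ I ↔ ∃ k : ℕ, ∀ n ∈ x, e n ≤ k)
    {x : Set ℕ} (hx : x.Finite) : x ∈ I := by
  rw [hI]
  rcases x.eq_empty_or_nonempty with rfl | hne
  · exact ⟨0, by simp⟩
  · obtain ⟨k, hk⟩ := (hx.image e).bddAbove
    exact ⟨k, fun n hn => hk (mem_image_of_mem e hn)⟩

lemma subset_mem (hI : ∀ x : Set ℕ, x ∈ I ↔ ∃ k : ℕ, ∀ n ∈ x, e n ≤ k)
    {x y : Set ℕ} (hxy : x ⊆ y) (hy : y ∈ I) : x ∈ I := by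
  rw [hI] at *
  obtain ⟨k, hk⟩ := hy
  exact ⟨k, fun n hn => hk n (hxy hn)⟩

/-- The strictly increasing selector sequence. -/
noncomputable def cseq (e : ℕ → ℕ) : ℕ → ℕ
  | 0 => 0
  | m+1 => sInf {n | cseq e m < n ∧ m + 1 ≤ e n}

lemma cseq_spec (he : ∀ k, {n | k ≤ e n}.Infinite) (m : ℕ) :
    cseq e m < cseq e (m+1) ∧ m + 1 ≤ e (cseq e (m+1)) := by
  have hne : {n | cseq e m < n ∧ m + 1 ≤ e n}.Nonempty := by
    obtain ⟨b, hb, hb2⟩ := (he (m+1)).exists_gt (cseq e m)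
    exact ⟨b, hb2, hb⟩
  have := csInf_mem hne
  exact this

lemma cseq_strictMono (he : ∀ k, {n | k ≤ e n}.Infinite) : StrictMono (cseq e) :=
  strictMono_nat_of_lt_succ fun m => (cseq_spec he m).1

lemma cseq_height (he : ∀ k, {n | k ≤ e n}.Infinite) (m : ℕ) : m ≤ e (cseq e m) := by
  cases m with
  | zero => exact Nat.zero_le _
  | succ m => exact (cseq_spec he m).2



lemma gap_exists (hI : ∀ x : Set ℕ, x ∈ I ↔ ∃ k : ℕ, ∀ n ∈ x, e n ≤ k)
    (he : ∀ k, {n | k ≤ e n}.Infinite) : HasOmegaGap I unboundingNumber := by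
  classical
  set P : ℕ × ℕ → ℕ := fun q => cseq e (Nat.pair q.1 q.2) with hP
  have hPinj : Function.Injective P := by
    intro q q' h
    have h2 := (cseq_strictMono he).injective h
    have h3 := congrArg Nat.unpair h2
    simp only [Nat.unpair_pair] at h3
    exact Prod.ext_iff.mp (by simpa using h3) |>.elim fun a b => Prod.ext a b
  have hPe : ∀ q : ℕ × ℕ, Nat.pair q.1 q.2 ≤ e (P q) := fun q => cseq_height he _
  set Acol : ℕ → Set ℕ := fun p => P '' {q | q.1 ≤ p} with hAcol
  set Bfun : (ℕ → ℕ) → Set ℕ := fun f => P '' {q | q.2 ≤ f q.1} with hBfun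
  obtain ⟨F, hFcard, hFunb⟩ := exists_unbounded_family
  refine ⟨Set.range Acol, Bfun '' F, ⟨?_, ?_⟩, ?_, ?_⟩
  · -- orthogonality
    rintro s ⟨p, rfl⟩ t ⟨f, -, rfl⟩
    refine finite_mem hI ?_
    rw [← Set.image_inter hPinj]
    refine (Set.Finite.image _ ?_)
    have hsub : {q : ℕ × ℕ | q.1 ≤ p} ∩ {q | q.2 ≤ f q.1} ⊆
        Set.Iic (p, (Finset.range (p+1)).sup f) := by
      rintro ⟨i, j⟩ ⟨h1, h2⟩
      simp only [Set.mem_setOf_eq] at h1 h2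
      exact Prod.mk_le_mk.mpr ⟨h1, le_trans h2 (Finset.le_sup (Finset.mem_range.mpr (Nat.lt_succ_of_le h1)))⟩
    exact (Set.finite_Iic _).subset hsub
  · -- no separator
    rintro C ⟨hC1, hC2⟩
    have hAC : ∀ p, ∃ k : ℕ, ∀ n ∈ Acol p ∩ C, e n ≤ k := by
      intro p
      exact (hI _).mp (hC1 (Acol p) ⟨p, rfl⟩)
    choose g hg using hAC
    have key : ∀ i j : ℕ, P (i, j) ∈ C → j ≤ g i := by
      intro i j hmem
      have h1 : P (i, j) ∈ Acol i ∩ C := ⟨⟨(i,j), by simp, rfl⟩, hmem⟩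
      have h2 := hg i _ h1
      calc j ≤ Nat.pair i j := Nat.right_le_pair i j
        _ ≤ e (P (i,j)) := by simpa using hPe (i,j)
        _ ≤ g i := h2
    obtain ⟨f, hfF, hfg⟩ := hFunb g
    have hBfC : Bfun f \ C ∈ I := hC2 _ ⟨f, hfF, rfl⟩
    obtain ⟨k, hk⟩ := (hI _).mp hBfC
    rw [Filter.not_eventually] at hfg
    obtain ⟨i, hik, hfi⟩ := (frequently_atTop.mp hfg) (k+1)
    push_neg at hfi
    have hmemB : P (i, f i) ∈ Bfun f := ⟨(i, f i), by simp, rfl⟩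
    have hnC : P (i, f i) ∉ C := fun hc => absurd (key i (f i) hc) (by omega)
    have := hk _ ⟨hmemB, hnC⟩
    have h2 : i ≤ e (P (i, f i)) := le_trans (Nat.left_le_pair i (f i)) (by simpa using hPe (i, f i))
    omega
  · -- #A = ℵ₀
    have hinj : Function.Injective Acol := by
      have hle : ∀ p p', Acol p = Acol p' → p ≤ p' := by
        intro p p' hpp
        have : P (p, 0) ∈ Acol p' := hpp ▸ ⟨(p, 0), by simp, rfl⟩
        obtain ⟨q, hq, hq2⟩ := this
        have := hPinj hq2
        rw [this] at hq
        exact hq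
      intro p p' h
      exact le_antisymm (hle p p' h) (hle p' p h.symm)
    rw [Cardinal.mk_range_eq _ hinj, Cardinal.mk_nat]
  · -- #B = 𝔟
    have hinj : Function.Injective Bfun := by
      have hle : ∀ f f' : ℕ → ℕ, Bfun f = Bfun f' → ∀ i, f i ≤ f' i := by
        intro f f' hff i
        have : P (i, f i) ∈ Bfun f' := hff ▸ ⟨(i, f i), by simp, rfl⟩
        obtain ⟨q, hq, hq2⟩ := this
        have := hPinj hq2
        rw [this] at hq
        exact hq
      intro f f' h
      exact funext fun i => le_antisymm (hle f f' h i) (hle f' f h.symm i)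
    rw [Cardinal.mk_image_eq hinj, hFcard]

lemma gap_lower {I : Set (Set ℕ)} {e : ℕ → ℕ}
    (hI : ∀ x : Set ℕ, x ∈ I ↔ ∃ k : ℕ, ∀ n ∈ x, e n ≤ k)
    (lam : Cardinal) (h : HasOmegaGap I lam) : unboundingNumber ≤ lam := by
  classical
  obtain ⟨A, B, ⟨horth, hnosep⟩, hA, hB⟩ := h
  -- enumerate A
  have hAc : A.Countable := by
    rw [← Set.countable_coe_iff, ← Cardinal.mk_le_aleph0_iff, hA]
  have hAne : A.Nonempty := by
    rw [← Set.nonempty_coe_sort, ← Cardinal.mk_ne_zero_iff, hA]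
    exact Cardinal.aleph0_ne_zero
  obtain ⟨s, hs⟩ := hAc.exists_eq_range hAne
  set σ : ℕ → Set ℕ := fun n => ⋃ m ∈ Finset.range (n+1), s m with hσ
  have hσmono : ∀ {m n : ℕ}, m ≤ n → σ m ⊆ σ n := by
    intro m n hmn x hx
    simp only [hσ, Set.mem_iUnion] at hx ⊢
    obtain ⟨i, hi, hxi⟩ := hx
    exact ⟨i, Finset.mem_range.mpr (lt_of_lt_of_le (Finset.mem_range.mp hi) (by omega)), hxi⟩
  have hsσ : ∀ n, s n ⊆ σ n := by
    intro n x hx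
    simp only [hσ, Set.mem_iUnion]
    exact ⟨n, Finset.mem_range.mpr (by omega), hx⟩
  -- σ_n ∩ t ∈ I for t ∈ B
  have hσt : ∀ t ∈ B, ∀ n, σ n ∩ t ∈ I := by
    intro t ht n
    have : σ n ∩ t = ⋃ m ∈ Finset.range (n+1), (s m ∩ t) := by
      simp only [hσ]; rw [Set.iUnion₂_inter]
    rw [this, hI]
    have hb : ∀ m, ∃ k : ℕ, ∀ x ∈ s m ∩ t, e x ≤ k := by
      intro m
      exact (hI _).mp (horth (s m) (by rw [hs]; exact Set.mem_range_self m) t ht)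
    choose k hk using hb
    refine ⟨(Finset.range (n+1)).sup k, ?_⟩
    intro x hx
    simp only [Set.mem_iUnion] at hx
    obtain ⟨m, hm, hxm⟩ := hx
    exact le_trans (hk m x hxm) (Finset.le_sup hm)
  -- the functions f_t
  have hft : ∀ t : ↥B, ∀ n : ℕ, ∃ k : ℕ, ∀ x ∈ σ n ∩ (t : Set ℕ), e x ≤ k := by
    intro t n
    exact (hI _).mp (hσt t t.2 n)
  choose f hf using hft
  -- case split on whether {f t} is unbounded
  by_cases hub : ∀ g : ℕ → ℕ, ∃ t ∈ Set.range f, ¬ ∀ᶠ i in atTop, t i ≤ g i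
  · calc unboundingNumber ≤ #(Set.range f) := unboundingNumber_le hub
      _ ≤ #(↥B) := Cardinal.mk_range_le
      _ = lam := hB
  · push_neg at hub
    obtain ⟨g, hg⟩ := hub
    exfalso
    -- monotone majorant
    set g' : ℕ → ℕ := fun n => (Finset.range (n+1)).sup g with hg'
    have hgg' : ∀ n, g n ≤ g' n := fun n => Finset.le_sup (Finset.mem_range.mpr (by omega))
    have hg'mono : ∀ {m n : ℕ}, m ≤ n → g' m ≤ g' n := by
      intro m n hmn
      apply Finset.sup_le
      intro b hb
      exact Finset.le_sup (Finset.mem_range.mpr (lt_of_lt_of_le (Finset.mem_range.mp hb) (by omega)))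
    set U : Set ℕ := ⋃ n, (σ n \ {m | e m ≤ g' n}) with hU
    apply hnosep (Set.univ \ U)
    constructor
    · -- A side
      intro x hx
      rw [hs] at hx
      obtain ⟨N, hN⟩ := hx
      rw [hI]
      refine ⟨g' N, ?_⟩
      rintro m ⟨hm1, -, hm2⟩
      by_contra hcon
      apply hm2
      rw [hU, Set.mem_iUnion]
      refine ⟨N, ?_, fun hle => hcon hle⟩
      exact hsσ N (by rwa [hN])
    · -- B side
      intro t ht
      have hev := hg (f ⟨t, ht⟩) (Set.mem_range_self _)
      rw [eventually_atTop] at hev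
      obtain ⟨N, hN⟩ := hev
      refine subset_mem hI ?_ (hσt t ht N)
      rintro m ⟨hmt, hmC⟩
      simp only [Set.mem_diff, Set.mem_univ, true_and, not_not] at hmC
      rw [hU, Set.mem_iUnion] at hmC
      obtain ⟨n, hmn, hme⟩ := hmC
      rcases le_or_gt n N with hnN | hNn
      · exact ⟨hσmono hnN hmn, hmt⟩
      · exfalso
        apply hme
        have h1 : e m ≤ f ⟨t, ht⟩ n := hf ⟨t, ht⟩ n m ⟨hmn, hmt⟩
        have h2 : f ⟨t, ht⟩ n ≤ g n := hN n (le_of_lt hNn)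
        exact Set.mem_setOf_eq ▸ le_trans h1 (le_trans h2 (hgg' n))

lemma reduction (a : ℕ → Set ℕ) (φ : ℕ → Set ℕ → ℝ) (I : Set (Set ℕ))
    (hfrag : IsFragmentation I a φ)
    (hnontriv : Set.univ ∉ I)
    (hnt : NowhereTall I) :
    ∃ e : ℕ → ℕ, (∀ x : Set ℕ, x ∈ I ↔ ∃ k : ℕ, ∀ n ∈ x, e n ≤ k) ∧
      (∀ k, {n | k ≤ e n}.Infinite) := by
  classical
  obtain ⟨⟨hne, hfin, hdisj, hcover⟩, hsub, hmem⟩ := hfrag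
  -- block function
  have hex : ∀ n : ℕ, ∃ i, n ∈ a i := by
    intro n
    have : n ∈ ⋃ i, a i := hcover ▸ Set.mem_univ n
    exact Set.mem_iUnion.mp this
  set blk : ℕ → ℕ := fun n => (hex n).choose with hblk
  have hblkmem : ∀ n, n ∈ a (blk n) := fun n => (hex n).choose_spec
  have hblkuniq : ∀ n i, n ∈ a i → blk n = i := by
    intro n i hni
    by_contra hne'
    exact (hdisj _ _ hne').ne_of_mem (hblkmem n) hni rfl
  set e : ℕ → ℕ := fun n => ⌈φ (blk n) {n}⌉₊ with he
  have hphie : ∀ n (k : ℕ), e n ≤ k ↔ φ (blk n) {n} ≤ (k : ℝ) := by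
    intro n k
    exact Nat.ceil_le
  -- the sets S_k are in I
  have hSk : ∀ k : ℕ, {n | e n ≤ k} ∈ I := by
    intro k
    by_contra hS
    apply hnt
    refine ⟨{n | e n ≤ k}, hS, ?_⟩
    intro Y hY hYinf
    -- the set of blocks met by Y is infinite
    have hJinf : {i | (Y ∩ a i).Nonempty}.Infinite := by
      by_contra hJ
      rw [Set.not_infinite] at hJ
      apply hYinf
      have hsub2 : Y ⊆ ⋃ i ∈ {i | (Y ∩ a i).Nonempty}, a i := by
        intro y hy
        exact Set.mem_biUnion ⟨y, hy, hblkmem y⟩ (hblkmem y)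
      exact (Set.Finite.biUnion hJ (fun i _ => hfin i)).subset hsub2
    -- choose one point per block
    set J := {i | (Y ∩ a i).Nonempty} with hJ
    have hzex : ∀ i ∈ J, ∃ z, z ∈ Y ∩ a i := fun i hi => hi
    choose z hz using hzex
    set Z : Set ℕ := ⋃ (i : ℕ) (hi : i ∈ J), {z i hi} with hZ
    have hZY : Z ⊆ Y := by
      intro x hx
      simp only [hZ, Set.mem_iUnion] at hx
      obtain ⟨i, hi, hx⟩ := hx
      rw [Set.mem_singleton_iff] at hx
      exact hx ▸ (hz i hi).1
    have hZblk : ∀ i (hi : i ∈ J), blk (z i hi) = i := fun i hi => hblkuniq _ _ (hz i hi).2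
    have hZinf : Z.Infinite := by
      have : Set.InjOn (fun i => if hi : i ∈ J then z i hi else 0) J := by
        intro i hi j hj hij
        simp only [dif_pos hi, dif_pos hj] at hij
        rw [← hZblk i hi, ← hZblk j hj, hij]
      have himg : (fun i => if hi : i ∈ J then z i hi else 0) '' J ⊆ Z := by
        rintro x ⟨i, hi, rfl⟩
        simp only [dif_pos hi, hZ, Set.mem_iUnion]
        exact ⟨i, hi, rfl⟩
      exact ((hJinf.image this).mono himg)
    refine ⟨Z, hZY, hZinf, ?_⟩
    rw [hmem]
    refine ⟨(k : ℝ), fun i => ?_⟩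
    by_cases hi : i ∈ J
    · have hZa : Z ∩ a i ⊆ {z i hi} := by
        rintro x ⟨hx1, hx2⟩
        simp only [hZ, Set.mem_iUnion] at hx1
        obtain ⟨j, hj, hx1⟩ := hx1
        rw [Set.mem_singleton_iff] at hx1 ⊢
        subst hx1
        have : blk (z j hj) = i := hblkuniq _ _ hx2
        rw [hZblk j hj] at this
        subst this
        rfl
      calc φ i (Z ∩ a i) ≤ φ i {z i hi} :=
            (hsub i).2.2.1 _ _ hZa (Set.singleton_subset_iff.mpr (hz i hi).2)
        _ ≤ (k : ℝ) := by
            have hzY := (hz i hi).1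
            have := hY hzY
            rw [Set.mem_setOf_eq, hphie] at this
            rwa [hZblk i hi] at this
    · have hZa : Z ∩ a i = ∅ := by
        rw [Set.eq_empty_iff_forall_notMem]
        rintro x ⟨hx1, hx2⟩
        exact hi ⟨x, hZY hx1, hx2⟩
      rw [hZa, (hsub i).1]
      exact Nat.cast_nonneg k
  -- characterization
  have hchar : ∀ x : Set ℕ, x ∈ I ↔ ∃ k : ℕ, ∀ n ∈ x, e n ≤ k := by
    intro x
    constructor
    · intro hx
      obtain ⟨K, hK⟩ := (hmem x).mp hx
      refine ⟨⌈K⌉₊, fun n hn => ?_⟩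
      rw [hphie]
      calc φ (blk n) {n} ≤ φ (blk n) (x ∩ a (blk n)) :=
            (hsub (blk n)).2.2.1 _ _ (Set.singleton_subset_iff.mpr ⟨hn, hblkmem n⟩)
              Set.inter_subset_right
        _ ≤ K := hK (blk n)
        _ ≤ (⌈K⌉₊ : ℝ) := Nat.le_ceil K
    · rintro ⟨k, hk⟩
      have hxS : x ⊆ {n | e n ≤ k} := fun n hn => hk n hn
      obtain ⟨K, hK⟩ := (hmem _).mp (hSk k)
      rw [hmem]
      refine ⟨K, fun i => ?_⟩
      exact le_trans ((hsub i).2.2.1 _ _ (Set.inter_subset_inter_left _ hxS)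
        Set.inter_subset_right) (hK i)
  refine ⟨e, hchar, ?_⟩
  -- unboundedness of e
  intro k
  by_contra hfin'
  rw [Set.not_infinite] at hfin'
  obtain ⟨M, hM⟩ := (hfin'.image e).bddAbove
  apply hnontriv
  rw [hchar]
  refine ⟨max k M, fun n _ => ?_⟩
  rcases le_or_gt k (e n) with h | h
  · exact le_trans (hM (Set.mem_image_of_mem e h)) (le_max_right _ _)
  · exact le_trans (le_of_lt h) (le_max_left _ _)

end auxGap

/-- If `I` is a non-trivial nowhere tall fragmented ideal on `ω`, then the Rothberger
number `𝔟(I)` equals the unbounding number `𝔟`: there is an `I`-(ω,𝔟)-gap and `𝔟` is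
least among cardinals `λ` admitting an `I`-(ω,λ)-gap. -/
theorem rothberger_nowhere_tall_eq_b
    (a : ℕ → Set ℕ) (φ : ℕ → Set ℕ → ℝ) (I : Set (Set ℕ))
    (hfrag : IsFragmentation I a φ)
    (hnontriv : Set.univ ∉ I)
    (hnt : NowhereTall I) :
    HasOmegaGap I unboundingNumber ∧
    ∀ lam : Cardinal, HasOmegaGap I lam → unboundingNumber ≤ lam := by
  obtain ⟨e, hI, he⟩ := reduction a φ I hfrag hnontriv hnt
  exact ⟨gap_exists hI he, fun lam h => gap_lower hI lam h⟩
end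

section
/- Let b, h ∈ ω^ω converge to infinity with b ≥ 2 and h non-decreasing. Let c ∈ ω^ω with c ≥ 2 converging to infinity and h ≤* c, and let P = {a_i : i < ω} be a partition of ω into nonempty finite sets with |a_i| ≤ log₂ b(i) for all but finitely many i. Then min{𝔟_Loc(b,h), 𝔟} ≤ 𝔟(I_c(P)); equivalently, every I_c(P)-orthogonal pair ⟨𝒜,ℬ⟩ with 𝒜 a countable partition of ω and |ℬ| < min{𝔟_Loc(b,h), 𝔟} is separated by some C ⊆ ω. -/
open Set Filter Cardinal

/-- The localization cardinal `𝔟_Loc(b,h)`: the least size of a family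
`F ⊆ ∏_i b(i)` that cannot be `∈*`-covered by a single slalom in `S(b,h)`. -/
noncomputable def bLoc (b h : ℕ → ℕ) : Cardinal :=
  sInf {c | ∃ F : Set (ℕ → ℕ), #F = c ∧ (∀ x ∈ F, ∀ i, x i < b i) ∧
    ∀ ψ : ℕ → Finset ℕ, (∀ i, ∀ m ∈ ψ i, m < b i) → (∀ i, (ψ i).card ≤ h i) →
      ∃ x ∈ F, ¬ ∀ᶠ i in atTop, x i ∈ ψ i}

/-- The fragmented ideal `I_c(P)` for `c ≥ 2` and the partition `P = {a_i}`, where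
`φ_i(x)` is the least `k` with `|x| < c(i)^k`: `x ∈ I_c(P)` iff the `φ_i(x ∩ a_i)` are
bounded, i.e. iff there is `K` with `|x ∩ a_i| < c(i)^K` for all `i`. -/
def Icp (c : ℕ → ℕ) (a : ℕ → Set ℕ) : Set (Set ℕ) :=
  {x | ∃ K : ℕ, ∀ i, (x ∩ a i).ncard < c i ^ K}

section AuxSep
variable {c : ℕ → ℕ} {a : ℕ → Set ℕ}

variable {c : ℕ → ℕ} {a : ℕ → Set ℕ}

lemma Icp_of_finite (hc2 : ∀ i, 2 ≤ c i) {x : Set ℕ} (hx : x.Finite) : x ∈ Icp c a := by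
  refine ⟨x.ncard + 1, fun i => ?_⟩
  have h1 : (x ∩ a i).ncard ≤ x.ncard := Set.ncard_le_ncard inter_subset_left hx
  have h2 : x.ncard < 2 ^ (x.ncard + 1) := by
    have h := Nat.lt_two_pow_self (n := x.ncard)
    have : (2:ℕ) ^ x.ncard ≤ 2 ^ (x.ncard + 1) := Nat.pow_le_pow_right (by norm_num) (Nat.le_succ _)
    omega
  have h3 : (2:ℕ) ^ (x.ncard + 1) ≤ c i ^ (x.ncard + 1) := Nat.pow_le_pow_left (hc2 i) _
  omega

lemma Icp_mono (hfin : ∀ i, (a i).Finite) {x y : Set ℕ} (hxy : x ⊆ y) (hy : y ∈ Icp c a) :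
    x ∈ Icp c a := by
  obtain ⟨K, hK⟩ := hy
  exact ⟨K, fun i => lt_of_le_of_lt
    (Set.ncard_le_ncard (inter_subset_inter_left _ hxy) ((hfin i).inter_of_right _)) (hK i)⟩

lemma Icp_union (hc2 : ∀ i, 2 ≤ c i) {x y : Set ℕ} (hx : x ∈ Icp c a) (hy : y ∈ Icp c a) :
    x ∪ y ∈ Icp c a := by
  obtain ⟨K, hK⟩ := hx; obtain ⟨L, hL⟩ := hy
  refine ⟨max K L + 1, fun i => ?_⟩
  have h1 : ((x ∪ y) ∩ a i).ncard ≤ (x ∩ a i).ncard + (y ∩ a i).ncard := by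
    rw [Set.union_inter_distrib_right]; exact Set.ncard_union_le _ _
  have hc1 : 1 ≤ c i := le_trans (by norm_num) (hc2 i)
  have h2 : c i ^ K ≤ c i ^ max K L := Nat.pow_le_pow_right hc1 (le_max_left _ _)
  have h3 : c i ^ L ≤ c i ^ max K L := Nat.pow_le_pow_right hc1 (le_max_right _ _)
  have h4 : 2 * c i ^ max K L ≤ c i ^ (max K L + 1) := by
    rw [pow_succ]
    calc 2 * c i ^ max K L = c i ^ max K L * 2 := by ring
    _ ≤ c i ^ max K L * c i := Nat.mul_le_mul_left _ (hc2 i)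
  have := hK i; have := hL i
  omega

lemma Icp_biUnion (hc2 : ∀ i, 2 ≤ c i) (N : ℕ) (f : ℕ → Set ℕ)
    (hf : ∀ n < N, f n ∈ Icp c a) : (⋃ n, ⋃ (_ : n < N), f n) ∈ Icp c a := by
  induction N with
  | zero => simpa using Icp_of_finite (a := a) hc2 finite_empty
  | succ N ih =>
    rw [Set.biUnion_lt_succ]
    exact Icp_union hc2 (ih fun n hn => hf n (by omega)) (hf N (by omega))

lemma ncard_biUnion_le_mul (F : Finset ℕ) (f : ℕ → Set ℕ) (d : ℕ)
    (hfin : ∀ m ∈ F, (f m).Finite) (hd : ∀ m ∈ F, (f m).ncard ≤ d) :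
    (⋃ m ∈ F, f m).ncard ≤ F.card * d := by
  classical
  induction F using Finset.induction with
  | empty => simp
  | @insert a F ha ih =>
    have h1 : (⋃ m ∈ insert a F, f m) = f a ∪ ⋃ m ∈ F, f m := by
      simp [Set.biUnion_insert]
    rw [h1, Finset.card_insert_of_notMem ha]
    calc (f a ∪ ⋃ m ∈ F, f m).ncard ≤ (f a).ncard + (⋃ m ∈ F, f m).ncard :=
          Set.ncard_union_le _ _
      _ ≤ d + F.card * d := by
          have := ih (fun m hm => hfin m (Finset.mem_insert_of_mem hm))
            (fun m hm => hd m (Finset.mem_insert_of_mem hm))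
          have := hd a (Finset.mem_insert_self _ _)
          omega
      _ = (F.card + 1) * d := by ring


end AuxSep



lemma exists_coding (s : Set ℕ) (hs : s.Finite) (m : ℕ) (hm : 2 ^ s.ncard ≤ m) :
    ∃ (enc : Set ℕ → ℕ) (dec : ℕ → Set ℕ), (∀ k, dec k ⊆ s) ∧
      ∀ u ⊆ s, enc u < m ∧ dec (enc u) = u := by
  classical
  set P := hs.toFinset.powerset with hP
  have hcard : P.card = 2 ^ s.ncard := by
    rw [hP, Finset.card_powerset, Set.ncard_eq_toFinset_card _ hs]
  set e := P.equivFin with he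
  refine ⟨fun u => if h : u ⊆ s then (e ⟨((hs.subset h).toFinset), by
      rw [hP, Finset.mem_powerset]
      exact Set.Finite.toFinset_subset_toFinset.2 h⟩ : Fin P.card).val else 0,
    fun k => if h : k < P.card then ((e.symm ⟨k, h⟩ : Finset ℕ) : Set ℕ) else ∅,
    fun k => ?_, fun u hu => ?_⟩
  · dsimp only
    by_cases h : k < P.card
    · rw [dif_pos h]
      have hmem : (e.symm ⟨k, h⟩ : Finset ℕ) ∈ P := (e.symm ⟨k, h⟩).2
      have hmem2 := Finset.mem_powerset.1 hmem
      intro x hx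
      have hx' : x ∈ (e.symm ⟨k, h⟩ : Finset ℕ) := by exact_mod_cast hx
      have : x ∈ hs.toFinset := hmem2 hx'
      simpa using this
    · rw [dif_neg h]; exact empty_subset _
  · dsimp only
    rw [dif_pos hu]
    have hlt : ((e ⟨((hs.subset hu).toFinset), by
        rw [hP, Finset.mem_powerset]
        exact Set.Finite.toFinset_subset_toFinset.2 hu⟩ : Fin P.card) : ℕ) < P.card :=
      (e _).isLt
    refine ⟨lt_of_lt_of_le hlt (hcard ▸ hm), ?_⟩
    rw [dif_pos hlt]
    have h2 : (⟨(e ⟨((hs.subset hu).toFinset), _⟩ : Fin P.card).val, hlt⟩ : Fin P.card)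
        = e ⟨((hs.subset hu).toFinset), by
        rw [hP, Finset.mem_powerset]
        exact Set.Finite.toFinset_subset_toFinset.2 hu⟩ := by
      apply Fin.ext; rfl
    rw [h2, Equiv.symm_apply_apply]
    exact (hs.subset hu).coe_toFinset

lemma exists_dominating (B : Set (Set ℕ)) (hB : #B < unboundingNumber)
    (f : Set ℕ → ℕ → ℕ) : ∃ g : ℕ → ℕ, ∀ s ∈ B, ∀ᶠ n in atTop, f s n ≤ g n := by
  by_contra hcon
  push_neg at hcon
  have hmem : #(f '' B) ∈ {c | ∃ F : Set (ℕ → ℕ), #F = c ∧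
      ∀ g : ℕ → ℕ, ∃ f' ∈ F, ¬ ∀ᶠ i in atTop, f' i ≤ g i} := by
    refine ⟨f '' B, rfl, fun g => ?_⟩
    obtain ⟨s, hs, hns⟩ := hcon g
    exact ⟨f s, ⟨s, hs, rfl⟩, Filter.not_eventually.2 (hns.mono fun _ h => not_le.2 h)⟩
  have := csInf_le' hmem
  have h2 : #(f '' B) ≤ #B := Cardinal.mk_image_le
  exact absurd (lt_of_le_of_lt (this.trans h2) hB) (lt_irrefl _)

lemma exists_slalom (b h : ℕ → ℕ) (B : Set (Set ℕ)) (hB : #B < bLoc b h)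
    (x : Set ℕ → ℕ → ℕ) (hx : ∀ s, ∀ i, x s i < b i) :
    ∃ ψ : ℕ → Finset ℕ, (∀ i, (ψ i).card ≤ h i) ∧
      ∀ s ∈ B, ∀ᶠ i in atTop, x s i ∈ ψ i := by
  by_contra hcon
  push_neg at hcon
  have hmem : #(x '' B) ∈ {c | ∃ F : Set (ℕ → ℕ), #F = c ∧ (∀ y ∈ F, ∀ i, y i < b i) ∧
      ∀ ψ : ℕ → Finset ℕ, (∀ i, ∀ m ∈ ψ i, m < b i) → (∀ i, (ψ i).card ≤ h i) →
        ∃ y ∈ F, ¬ ∀ᶠ i in atTop, y i ∈ ψ i} := by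
    refine ⟨x '' B, rfl, ?_, fun ψ _ hcard => ?_⟩
    · rintro y ⟨s, _, rfl⟩ i; exact hx s i
    · obtain ⟨s, hs, hns⟩ := hcon ψ hcard
      exact ⟨x s, ⟨s, hs, rfl⟩, Filter.not_eventually.2 hns⟩
  have := csInf_le' hmem
  have h2 : #(x '' B) ≤ #B := Cardinal.mk_image_le
  exact absurd (lt_of_le_of_lt (this.trans h2) hB) (lt_irrefl _)

lemma main_sep (b h c : ℕ → ℕ) (a : ℕ → Set ℕ)
    (hb2 : ∀ i, 2 ≤ b i)
    (hc2 : ∀ i, 2 ≤ c i)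
    (hhc : ∀ᶠ i in atTop, h i ≤ c i)
    (hpart : IsPartitionFin a)
    (hsize : ∀ᶠ i in atTop, (a i).ncard ≤ Nat.log 2 (b i))
    (A : ℕ → Set ℕ) (hAdisj : ∀ i j, i ≠ j → Disjoint (A i) (A j))
    (hAcov : (⋃ i, A i) = Set.univ)
    (B : Set (Set ℕ)) (hBcard : #B < min (bLoc b h) unboundingNumber)
    (hAB : ∀ i : ℕ, ∀ s ∈ B, A i ∩ s ∈ Icp c a) :
    ∃ C : Set ℕ, (∀ i : ℕ, A i ∩ C ∈ Icp c a) ∧ ∀ s ∈ B, s \ C ∈ Icp c a := by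
  classical
  obtain ⟨hne, hfin, hdisj, hcov⟩ := hpart
  have hc1 : ∀ i, 1 ≤ c i := fun i => le_trans (by norm_num) (hc2 i)
  -- choose exponents witnessing A n ∩ s ∈ Icp
  have hf : ∀ s n, ∃ K : ℕ, s ∈ B → ∀ i, ((A n ∩ s) ∩ a i).ncard < c i ^ K := by
    intro s n
    by_cases hs : s ∈ B
    · obtain ⟨K, hK⟩ := hAB n s hs
      exact ⟨K, fun _ => hK⟩
    · exact ⟨0, fun hs' => absurd hs' hs⟩
  choose f hfspec using hf
  obtain ⟨g, hg⟩ := exists_dominating B (lt_of_lt_of_le hBcard (min_le_right _ _)) f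
  -- coding
  have hcode : ∀ i, ∃ (enc : Set ℕ → ℕ) (dec : ℕ → Set ℕ), (∀ k, dec k ⊆ a i) ∧
      (2 ^ (a i).ncard ≤ b i → ∀ u ⊆ a i, enc u < b i ∧ dec (enc u) = u) := by
    intro i
    by_cases hgood : 2 ^ (a i).ncard ≤ b i
    · obtain ⟨enc, dec, h1, h2⟩ := exists_coding (a i) (hfin i) (b i) hgood
      exact ⟨enc, dec, h1, fun _ => h2⟩
    · exact ⟨fun _ => 0, fun _ => ∅, fun _ => empty_subset _, fun hg' => absurd hg' hgood⟩
  choose enc dec hdecsub hcode2 using hcode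
  set x : Set ℕ → ℕ → ℕ := fun s i => if 2 ^ (a i).ncard ≤ b i then enc i (s ∩ a i) else 0
    with hxdef
  have hxlt : ∀ s i, x s i < b i := by
    intro s i
    rw [hxdef]
    dsimp only
    split
    · exact ((hcode2 i ‹_›) _ inter_subset_right).1
    · have := hb2 i; omega
  obtain ⟨ψ, hψcard, hψcov⟩ :=
    exists_slalom b h B (lt_of_lt_of_le hBcard (min_le_left _ _)) x hxlt
  obtain ⟨i₁, hi₁⟩ := eventually_atTop.1 hhc
  obtain ⟨i₀, hi₀⟩ := eventually_atTop.1 hsize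
  have hgood : ∀ i, i₀ ≤ i → 2 ^ (a i).ncard ≤ b i := by
    intro i hi
    calc 2 ^ (a i).ncard ≤ 2 ^ Nat.log 2 (b i) :=
          Nat.pow_le_pow_right (by norm_num) (hi₀ i hi)
    _ ≤ b i := Nat.pow_log_le_self 2 (by have := hb2 i; omega)
  set C : Set ℕ := {y | ∃ i, y ∈ a i ∧ ∃ m ∈ ψ i, ∃ n, y ∈ A n ∧ y ∈ dec i m ∧
      (A n ∩ dec i m ∩ a i).ncard < c i ^ g n} with hC
  refine ⟨C, ?_, ?_⟩
  · -- A n ∩ C ∈ Icp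
    intro n
    set M := (Finset.range i₁).sup (fun j => (a j).ncard + 1) with hM
    refine ⟨g n + 2 + M, fun i => ?_⟩
    by_cases hii : i₁ ≤ i
    · set T : ℕ → Set ℕ := fun m =>
        if (A n ∩ dec i m ∩ a i).ncard < c i ^ g n then A n ∩ dec i m ∩ a i else ∅ with hT
      have hTfin : ∀ m ∈ ψ i, (T m).Finite := by
        intro m _
        rw [hT]; dsimp only; split
        · exact (hfin i).inter_of_right _
        · exact finite_empty
      have hTcard : ∀ m ∈ ψ i, (T m).ncard ≤ c i ^ g n := by
        intro m _
        rw [hT]; dsimp only; split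
        · omega
        · simp
      have hsub : (A n ∩ C) ∩ a i ⊆ ⋃ m ∈ ψ i, T m := by
        rintro y ⟨⟨hyA, hyC⟩, hya⟩
        obtain ⟨i', hyai', m, hm, n', hyAn', hydec, hsmall⟩ := hyC
        have hii' : i' = i := by
          by_contra hne'
          exact absurd hya (Set.disjoint_left.1 (hdisj i' i hne') hyai')
        subst hii'
        have hnn' : n' = n := by
          by_contra hne'
          exact absurd hyA (Set.disjoint_left.1 (hAdisj n' n hne') hyAn')
        subst hnn'
        refine mem_iUnion₂.2 ⟨m, hm, ?_⟩
        rw [hT]; dsimp only; rw [if_pos hsmall]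
        exact ⟨⟨hyA, hydec⟩, hya⟩
      have h1 : ((A n ∩ C) ∩ a i).ncard ≤ (ψ i).card * c i ^ g n :=
        le_trans (Set.ncard_le_ncard hsub (Set.Finite.biUnion (ψ i).finite_toSet hTfin))
          (ncard_biUnion_le_mul (ψ i) T _ hTfin hTcard)
      have h2 : (ψ i).card * c i ^ g n ≤ c i * c i ^ g n :=
        Nat.mul_le_mul_right _ (le_trans (hψcard i) (hi₁ i hii))
      have h3 : c i * c i ^ g n = c i ^ (g n + 1) := (pow_succ' (c i) (g n)).symm
      have h4 : c i ^ (g n + 1) < c i ^ (g n + 2) :=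
        Nat.pow_lt_pow_right (hc2 i) (by omega)
      have h5 : c i ^ (g n + 2) ≤ c i ^ (g n + 2 + M) :=
        Nat.pow_le_pow_right (hc1 i) (by omega)
      omega
    · push_neg at hii
      have h1 : ((A n ∩ C) ∩ a i).ncard ≤ (a i).ncard :=
        Set.ncard_le_ncard inter_subset_right (hfin i)
      have h2 : (a i).ncard + 1 ≤ M :=
        Finset.le_sup (f := fun j => (a j).ncard + 1) (Finset.mem_range.2 hii)
      have h3 : (a i).ncard < 2 ^ (a i).ncard := Nat.lt_two_pow_self
      have h4 : (2:ℕ) ^ (a i).ncard ≤ c i ^ (a i).ncard := Nat.pow_le_pow_left (hc2 i) _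
      have h5 : c i ^ (a i).ncard ≤ c i ^ (g n + 2 + M) :=
        Nat.pow_le_pow_right (hc1 i) (by omega)
      omega
  · -- s \ C ∈ Icp
    intro s hs
    obtain ⟨N, hN⟩ := eventually_atTop.1 (hg s hs)
    obtain ⟨Is, hIs⟩ := eventually_atTop.1 (hψcov s hs)
    set i₂ := max Is i₀ with hi₂
    set G := (Finset.range N).sup (f s) with hG
    set M₂ := (Finset.range i₂).sup (fun j => (a j).ncard + 1) with hM₂
    refine ⟨N + G + 1 + M₂, fun i => ?_⟩
    by_cases hii : i₂ ≤ i
    · have hsub : (s \ C) ∩ a i ⊆ ⋃ n ∈ Finset.range N, ((A n ∩ s) ∩ a i) := by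
        rintro y ⟨⟨hys, hyC⟩, hya⟩
        have hyU : y ∈ ⋃ n, A n := hAcov ▸ mem_univ y
        obtain ⟨n, hyAn⟩ := mem_iUnion.1 hyU
        have hnN : n < N := by
          by_contra hnN
          push_neg at hnN
          apply hyC
          have higood : 2 ^ (a i).ncard ≤ b i := hgood i (le_trans (le_max_right _ _) hii)
          have hxmem : x s i ∈ ψ i := hIs i (le_trans (le_max_left _ _) hii)
          have hxval : x s i = enc i (s ∩ a i) := if_pos higood
          have hdec : dec i (enc i (s ∩ a i)) = s ∩ a i :=
            ((hcode2 i higood) _ inter_subset_right).2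
          refine ⟨i, hya, x s i, hxmem, n, hyAn, ?_, ?_⟩
          · rw [hxval, hdec]; exact ⟨hys, hya⟩
          · rw [hxval, hdec]
            have heq : A n ∩ (s ∩ a i) ∩ a i = (A n ∩ s) ∩ a i := by
              ext z; constructor
              · rintro ⟨⟨hz1, hz2, hz3⟩, hz4⟩; exact ⟨⟨hz1, hz2⟩, hz4⟩
              · rintro ⟨⟨hz1, hz2⟩, hz4⟩; exact ⟨⟨hz1, hz2, hz4⟩, hz4⟩
            rw [heq]
            exact lt_of_lt_of_le (hfspec s n hs i)
              (Nat.pow_le_pow_right (hc1 i) (hN n hnN))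
        exact mem_iUnion₂.2 ⟨n, Finset.mem_range.2 hnN, ⟨⟨hyAn, hys⟩, hya⟩⟩
      have hTfin : ∀ n ∈ Finset.range N, ((A n ∩ s) ∩ a i).Finite :=
        fun n _ => (hfin i).inter_of_right _
      have hTcard : ∀ n ∈ Finset.range N, ((A n ∩ s) ∩ a i).ncard ≤ c i ^ G :=
        fun n hn => le_trans (le_of_lt (hfspec s n hs i))
          (Nat.pow_le_pow_right (hc1 i) (Finset.le_sup hn))
      have h1 : ((s \ C) ∩ a i).ncard ≤ N * c i ^ G := by
        have := le_trans
          (Set.ncard_le_ncard hsub (Set.Finite.biUnion (Finset.range N).finite_toSet hTfin))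
          (ncard_biUnion_le_mul (Finset.range N) _ _ hTfin hTcard)
        simpa using this
      have hNlt : N < c i ^ N :=
        lt_of_lt_of_le (Nat.lt_two_pow_self) (Nat.pow_le_pow_left (hc2 i) _)
      have h2 : N * c i ^ G < c i ^ N * c i ^ G :=
        mul_lt_mul_of_pos_right hNlt (Nat.pow_pos (hc1 i))
      have h3 : c i ^ N * c i ^ G = c i ^ (N + G) := (pow_add (c i) N G).symm
      have h4 : c i ^ (N + G) ≤ c i ^ (N + G + 1 + M₂) :=
        Nat.pow_le_pow_right (hc1 i) (by omega)
      omega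
    · push_neg at hii
      have h1 : ((s \ C) ∩ a i).ncard ≤ (a i).ncard :=
        Set.ncard_le_ncard inter_subset_right (hfin i)
      have h2 : (a i).ncard + 1 ≤ M₂ :=
        Finset.le_sup (f := fun j => (a j).ncard + 1) (Finset.mem_range.2 hii)
      have h3 : (a i).ncard < 2 ^ (a i).ncard := Nat.lt_two_pow_self
      have h4 : (2:ℕ) ^ (a i).ncard ≤ c i ^ (a i).ncard := Nat.pow_le_pow_left (hc2 i) _
      have h5 : c i ^ (a i).ncard ≤ c i ^ (N + G + 1 + M₂) :=
        Nat.pow_le_pow_right (hc1 i) (by omega)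
      omega

/-- `min{𝔟_Loc(b,h), 𝔟} ≤ 𝔟(I_c(P))`: there is no `I_c(P)`-(ω,λ)-gap with
`λ < min{𝔟_Loc(b,h), 𝔟}`; equivalently, every `I_c(P)`-orthogonal pair `⟨A, B⟩` with `A`
a countable partition of `ω` and `|B| < min{𝔟_Loc(b,h), 𝔟}` is separated. -/
theorem min_bLoc_b_le_rothberger_Icp
    (b h c : ℕ → ℕ) (a : ℕ → Set ℕ)
    (hb2 : ∀ i, 2 ≤ b i) (hbtop : Tendsto b atTop atTop)
    (hhmono : Monotone h) (hhtop : Tendsto h atTop atTop)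
    (hc2 : ∀ i, 2 ≤ c i) (hctop : Tendsto c atTop atTop)
    (hhc : ∀ᶠ i in atTop, h i ≤ c i)
    (hpart : IsPartitionFin a)
    (hsize : ∀ᶠ i in atTop, (a i).ncard ≤ Nat.log 2 (b i)) :
    (∀ lam : Cardinal, HasOmegaGap (Icp c a) lam →
      min (bLoc b h) unboundingNumber ≤ lam) ∧
    (∀ A : ℕ → Set ℕ, (∀ i j, i ≠ j → Disjoint (A i) (A j)) → (⋃ i, A i) = Set.univ →
      ∀ B : Set (Set ℕ), #B < min (bLoc b h) unboundingNumber →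
        (∀ i : ℕ, ∀ s ∈ B, A i ∩ s ∈ Icp c a) →
        ∃ C : Set ℕ, (∀ i : ℕ, A i ∩ C ∈ Icp c a) ∧ ∀ s ∈ B, s \ C ∈ Icp c a) := by
  have main2 := main_sep b h c a hb2 hc2 hhc hpart hsize
  obtain ⟨hne, hfin, hdisjP, hcovP⟩ := hpart
  constructor
  · rintro lam ⟨SA, SB, ⟨horth, hgap⟩, hSA, hSB⟩
    by_contra hlt
    push_neg at hlt
    classical
    have hcnt : Nonempty (ℕ ≃ ↥SA) := by
      rw [← Cardinal.eq, Cardinal.mk_nat, hSA]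
    obtain ⟨φ⟩ := hcnt
    set e : ℕ → Set ℕ := fun n => (φ n : Set ℕ) with he
    set D : ℕ → Set ℕ := fun n => e n \ ⋃ k, ⋃ (_ : k < n), e k with hD
    set R : Set ℕ := (⋃ n, e n)ᶜ with hR
    set A : ℕ → Set ℕ := fun n => D n ∪ (R ∩ {n}) with hA
    have hmin : ∀ (z n : ℕ), z ∈ e n → ∃ k, k ≤ n ∧ z ∈ D k := by
      intro z n hz
      have hex : ∃ k, z ∈ e k := ⟨n, hz⟩
      refine ⟨Nat.find hex, Nat.find_le hz, Nat.find_spec hex, ?_⟩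
      simp only [mem_iUnion, not_exists]
      intro j hj
      exact Nat.find_min hex hj
    have hDe : ∀ n, D n ⊆ e n := fun n => diff_subset
    have hAdisj : ∀ i j, i ≠ j → Disjoint (A i) (A j) := by
      intro i j hij
      rw [Set.disjoint_left]
      rintro z (⟨hz1, hz1'⟩ | ⟨hz1, hz1'⟩) hzj
      · rcases hzj with ⟨hz2, hz2'⟩ | ⟨hz2, hz2'⟩
        · rcases Nat.lt_or_ge i j with hlt' | hge
          · exact hz2' (mem_iUnion.2 ⟨i, mem_iUnion.2 ⟨hlt', hz1⟩⟩)
          · have hlt'' : j < i := lt_of_le_of_ne hge (Ne.symm hij)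
            exact hz1' (mem_iUnion.2 ⟨j, mem_iUnion.2 ⟨hlt'', hz2⟩⟩)
        · exact hz2 (mem_iUnion.2 ⟨i, hz1⟩)
      · rcases hzj with ⟨hz2, hz2'⟩ | ⟨hz2, hz2'⟩
        · exact hz1 (mem_iUnion.2 ⟨j, hz2⟩)
        · have : z = i := hz1'
          have : z = j := hz2'
          omega
    have hAcov : (⋃ i, A i) = Set.univ := by
      apply eq_univ_of_forall
      intro z
      by_cases hz : z ∈ ⋃ n, e n
      · obtain ⟨n, hn⟩ := mem_iUnion.1 hz
        obtain ⟨k, _, hk⟩ := hmin z n hn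
        exact mem_iUnion.2 ⟨k, Or.inl hk⟩
      · exact mem_iUnion.2 ⟨z, Or.inr ⟨hz, rfl⟩⟩
    have hAB : ∀ i, ∀ t ∈ SB, A i ∩ t ∈ Icp c a := by
      intro i t ht
      have h1 : A i ∩ t ⊆ (e i ∩ t) ∪ (R ∩ {i}) := by
        rintro z ⟨(⟨hz1, _⟩ | hz1), hz2⟩
        · exact Or.inl ⟨hz1, hz2⟩
        · exact Or.inr hz1
      have h2 : (e i ∩ t) ∪ (R ∩ {i}) ∈ Icp c a := by
        apply Icp_union hc2
        · exact horth (e i) (φ i).2 t ht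
        · exact Icp_of_finite hc2 ((finite_singleton i).subset inter_subset_right)
      exact Icp_mono hfin h1 h2
    have hSBlt : #SB < min (bLoc b h) unboundingNumber := by rw [hSB]; exact hlt
    obtain ⟨C, hC1, hC2⟩ := main2 A hAdisj hAcov SB hSBlt hAB
    apply hgap C
    constructor
    · intro s hsA
      obtain ⟨n, hn⟩ : ∃ n, e n = s := ⟨φ.symm ⟨s, hsA⟩, by simp [he]⟩
      have hsub : s ∩ C ⊆ ⋃ k, ⋃ (_ : k < n + 1), (A k ∩ C) := by
        rintro z ⟨hzs, hzC⟩
        obtain ⟨k, hk, hzD⟩ := hmin z n (hn ▸ hzs)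
        exact mem_iUnion.2 ⟨k, mem_iUnion.2 ⟨by omega, Or.inl hzD, hzC⟩⟩
      exact Icp_mono hfin hsub (Icp_biUnion hc2 (n + 1) _ (fun k _ => hC1 k))
    · exact hC2
  · intro A hAdisj hAcov B hB hAB
    exact main2 A hAdisj hAcov B hB hAB
end

section
/- Let I = I⟨a_i,φ_i⟩ be a tall fragmented ideal, L̄ = {L_n : n < ω} a partition of ω into infinite sets, and ρ ∈ ω^ω with ρ > 0. If lim_{i→∞} φ_i(a_i)/ρ(i) = +∞, then 𝔟(I) ≤ 𝔟^ρ(I,L̄): for every Ψ ⊆ S(2^ā,ρ) such that every Y ∈ O(I,L̄) satisfies ψ ∍' Y for some ψ ∈ Ψ, there exists an I-(ω,λ)-gap with λ ≤ |Ψ|. -/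
open Set Filter Cardinal

/-- finite subadditivity for submeasures -/
lemma submeasure_sUnion_le' {s : Set ℕ} {φ : Set ℕ → ℝ} (h : IsSubmeasureOn s φ)
    (W : Finset (Set ℕ)) (hW : ∀ x ∈ W, x ⊆ s) {d : ℝ}
    (hd : ∀ x ∈ W, φ x ≤ d) : φ (⋃₀ (↑W : Set (Set ℕ))) ≤ W.card * d := by
  classical
  induction W using Finset.induction with
  | empty => simp [h.1]
  | @insert x W hx ih =>
    have hWs : ∀ y ∈ W, y ⊆ s := fun y hy => hW y (Finset.mem_insert_of_mem hy)
    have hUs : ⋃₀ (↑W : Set (Set ℕ)) ⊆ s := by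
      intro p hp; obtain ⟨y, hy, hyp⟩ := hp
      exact hWs y (by exact_mod_cast hy) hyp
    have h1 : φ (⋃₀ (insert x (↑W : Set (Set ℕ)))) ≤ φ x + φ (⋃₀ (↑W : Set (Set ℕ))) := by
      rw [Set.sUnion_insert]
      exact h.2.2.2 x _ (hW x (Finset.mem_insert_self x W)) hUs
    have h2 := ih hWs (fun y hy => hd y (Finset.mem_insert_of_mem hy))
    have h3 : φ x ≤ d := hd x (Finset.mem_insert_self x W)
    rw [Finset.card_insert_of_notMem hx]
    push_cast
    rw [add_mul, one_mul]
    linarith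

/-- greedy minimal set of submeasure between c and c + K₀ -/
lemma greedy_exists' {a' : Set ℕ} {φ : Set ℕ → ℝ} (h : IsSubmeasureOn a' φ)
    {r : Set ℕ} (hr : r ⊆ a') (hfin : r.Finite) {c K₀ : ℝ} (hc : 0 < c)
    (hcr : c ≤ φ r) (hK : ∀ p ∈ a', φ {p} ≤ K₀) :
    ∃ b : Set ℕ, b ⊆ r ∧ c ≤ φ b ∧ φ b ≤ c + K₀ := by
  classical
  set P := hfin.toFinset.powerset.filter (fun t : Finset ℕ => c ≤ φ (↑t : Set ℕ)) with hP
  have hPne : hfin.toFinset ∈ P := by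
    simp only [hP, Finset.mem_filter, Finset.mem_powerset, hfin.coe_toFinset]
    exact ⟨le_refl _, hcr⟩
  obtain ⟨t, htP, hmin⟩ := P.exists_min_image Finset.card ⟨_, hPne⟩
  simp only [hP, Finset.mem_filter, Finset.mem_powerset] at htP
  have htr : (↑t : Set ℕ) ⊆ r := by
    intro p hp; rw [← hfin.coe_toFinset]; exact_mod_cast htP.1 (by exact_mod_cast hp)
  have htne : t.Nonempty := by
    rcases Finset.eq_empty_or_nonempty t with rfl | hne
    · exfalso; simp only [Finset.coe_empty] at htP; rw [h.1] at htP; linarith [htP.2]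
    · exact hne
  obtain ⟨p, hp⟩ := htne
  have herase : ¬ (c ≤ φ ↑(t.erase p)) := by
    intro hcon
    have hmem : t.erase p ∈ P := by
      simp only [hP, Finset.mem_filter, Finset.mem_powerset]
      exact ⟨(Finset.erase_subset p t).trans htP.1, hcon⟩
    have h1 := hmin _ hmem
    have h2 := Finset.card_erase_lt_of_mem hp
    omega
  push_neg at herase
  have hps : (↑(t.erase p) : Set ℕ) ⊆ a' := fun q hq => hr (htr (by
    exact_mod_cast Finset.erase_subset p t (by exact_mod_cast hq)))
  have hpa : ({p} : Set ℕ) ⊆ a' := by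
    intro q hq; rw [Set.mem_singleton_iff] at hq; subst hq
    exact hr (htr (by exact_mod_cast hp))
  have hsplit : (↑t : Set ℕ) = {p} ∪ ↑(t.erase p) := by
    conv_lhs => rw [← Finset.insert_erase hp]
    rw [Finset.coe_insert, Set.insert_eq]
  refine ⟨↑t, htr, htP.2, ?_⟩
  have hsub := h.2.2.2 _ _ hpa hps
  have hKp := hK p (hpa rfl)
  rw [hsplit]
  linarith

/-- Let `I = I⟨a_i, φ_i⟩` be a tall fragmented ideal, `L̄ = {L_n}` a partition of `ω`
into infinite sets, and `ρ ∈ ω^ω` with `ρ > 0` such that `φ_i(a_i)/ρ(i) → ∞`.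
Then `𝔟(I) ≤ 𝔟^ρ(I, L̄)`: for every family `Ψ ⊆ S(2^ā, ρ)` of slaloms such that every
`Y ∈ O(I, L̄)` satisfies `ψ ∍' Y` for some `ψ ∈ Ψ`, there exists an `I`-(ω,λ)-gap with
`λ ≤ |Ψ|`. -/
theorem rothberger_le_bParam
    (a : ℕ → Set ℕ) (φ : ℕ → Set ℕ → ℝ) (I : Set (Set ℕ))
    (hfrag : IsFragmentation I a φ) (htall : IsTall I)
    (L : ℕ → Set ℕ) (hLinf : ∀ n, (L n).Infinite)
    (hLdisj : ∀ n m, n ≠ m → Disjoint (L n) (L m)) (hLcov : (⋃ n, L n) = Set.univ)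
    (ρ : ℕ → ℕ) (hρ : ∀ i, 0 < ρ i)
    (hlim : Tendsto (fun i => φ i (a i) / (ρ i : ℝ)) atTop atTop) :
    ∀ Ψ : Set (ℕ → Finset (Set ℕ)),
      (∀ ψ ∈ Ψ, ∀ i : ℕ, (∀ x ∈ ψ i, x ⊆ a i) ∧ (ψ i).card ≤ ρ i) →
      (∀ Y : Set ℕ, (∀ n : ℕ, (Y ∩ ⋃ i ∈ L n, a i) ∈ I) →
        ∃ ψ ∈ Ψ, ∀ n : ℕ, {i | i ∈ L n ∧ Y ∩ a i ∈ ψ i}.Infinite) →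
      ∃ lam : Cardinal, lam ≤ #Ψ ∧ HasOmegaGap I lam := by
  classical
  obtain ⟨⟨hane, hafin, hadisj, hacov⟩, hsubm, hmem⟩ := hfrag
  intro Ψ hΨ hcov
  -- Step 1: tallness gives a uniform bound on submeasures of singletons
  have htb : ∃ K₀ : ℝ, 0 ≤ K₀ ∧ ∃ N₀ : ℕ, ∀ i, N₀ ≤ i → ∀ p ∈ a i, φ i {p} ≤ K₀ := by
    by_contra hcon
    push_neg at hcon
    have hsel : ∀ k N : ℕ, ∃ ip : ℕ × ℕ, N ≤ ip.1 ∧ ip.2 ∈ a ip.1 ∧ (k : ℝ) < φ ip.1 {ip.2} := by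
      intro k N
      obtain ⟨i, hiN, p, hpa, hpφ⟩ := hcon (k : ℝ) (Nat.cast_nonneg k) N
      exact ⟨(i, p), hiN, hpa, hpφ⟩
    choose F hF1 hF2 hF3 using hsel
    let seq : ℕ → ℕ × ℕ := fun k => Nat.rec (F 0 0) (fun k prev => F (k + 1) (prev.1 + 1)) k
    have hseq0 : seq 0 = F 0 0 := rfl
    have hseqS : ∀ k, seq (k + 1) = F (k + 1) ((seq k).1 + 1) := fun k => rfl
    have hkey : ∀ k, (seq k).2 ∈ a (seq k).1 ∧ (k : ℝ) < φ (seq k).1 {(seq k).2} := by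
      intro k
      cases k with
      | zero => exact ⟨hF2 0 0, hF3 0 0⟩
      | succ k => exact ⟨hF2 (k + 1) ((seq k).1 + 1), hF3 (k + 1) ((seq k).1 + 1)⟩
    have hstep : ∀ k, (seq k).1 < (seq (k + 1)).1 := by
      intro k
      have h := hF1 (k + 1) ((seq k).1 + 1)
      rw [hseqS k]
      omega
    have hmono : StrictMono (fun k => (seq k).1) := strictMono_nat_of_lt_succ hstep
    have hpinj : Function.Injective (fun k => (seq k).2) := by
      intro k l hkl
      have hkl' : (seq k).2 = (seq l).2 := hkl
      by_contra hne
      have hine : (seq k).1 ≠ (seq l).1 := fun h => hne (hmono.injective h)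
      have h1 := (hkey k).1
      have h2 := (hkey l).1
      rw [← hkl'] at h2
      exact (Set.disjoint_left.1 (hadisj _ _ hine) h1) h2
    have hXinf : (Set.range (fun k => (seq k).2)).Infinite :=
      Set.infinite_range_of_injective hpinj
    obtain ⟨Z, hZX, hZinf, hZI⟩ := htall _ (Set.subset_univ _) hXinf
    obtain ⟨K, hK⟩ := (hmem Z).1 hZI
    obtain ⟨N, hNK⟩ := exists_nat_gt K
    have hSinf : ((fun k => (seq k).2) ⁻¹' Z).Infinite := hZinf.preimage hZX
    obtain ⟨k, hkS, hNk⟩ := hSinf.exists_gt N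
    have hmem1 : (seq k).2 ∈ Z := hkS
    have h1 := (hkey k).1
    have h2 := (hkey k).2
    have hmono2 := (hsubm (seq k).1).2.2.1 {(seq k).2} (Z ∩ a (seq k).1)
      (Set.singleton_subset_iff.2 ⟨hmem1, h1⟩) Set.inter_subset_right
    have h3 := hK (seq k).1
    have hcast : (N : ℝ) < (k : ℝ) := by exact_mod_cast hNk
    linarith
  obtain ⟨K₀, hK₀0, N₀, hK₀⟩ := htb
  -- Step 2: the index map for the partition L
  have hnex : ∀ i, ∃ n, i ∈ L n := by
    intro i
    have : i ∈ ⋃ n, L n := by rw [hLcov]; trivial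
    exact Set.mem_iUnion.1 this
  choose nIdx hnIdx using hnex
  have hnIdx_eq : ∀ i n, i ∈ L n → nIdx i = n := by
    intro i n h
    by_contra hne
    exact (Set.disjoint_left.1 (hLdisj _ _ hne) (hnIdx i)) h
  set δ : ℕ → ℝ := fun i => φ i (a i) / (3 * (ρ i : ℝ)) with hδdef
  -- Step 3: the key construction
  have key : ∀ ψ : ℕ → Finset (Set ℕ), ∀ i : ℕ,
      ∃ b : Set ℕ, b ⊆ a i ∧ φ i b ≤ ((nIdx i : ℝ) + 1) + K₀ ∧
        ((N₀ ≤ i ∧ (∀ x ∈ ψ i, x ⊆ a i) ∧ ((ψ i).card ≤ ρ i) ∧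
            3 * ((nIdx i : ℝ) + 1) ≤ φ i (a i)) →
          (((nIdx i : ℝ) + 1) ≤ φ i b ∧ ∀ x ∈ ψ i, φ i x ≤ δ i → b ∩ x = ∅)) := by
    intro ψ i
    have hn0 : (0 : ℝ) ≤ (nIdx i : ℝ) := Nat.cast_nonneg _
    by_cases hcase : N₀ ≤ i ∧ (∀ x ∈ ψ i, x ⊆ a i) ∧ ((ψ i).card ≤ ρ i) ∧
        3 * ((nIdx i : ℝ) + 1) ≤ φ i (a i)
    · obtain ⟨hiN, hxs, hcard, hbig⟩ := hcase
      set W := (ψ i).filter (fun x => φ i x ≤ δ i) with hWdef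
      have hWsub : ∀ x ∈ W, x ⊆ a i := fun x hx => hxs x (Finset.mem_filter.1 hx).1
      have hUle : φ i (⋃₀ (↑W : Set (Set ℕ))) ≤ W.card * δ i :=
        submeasure_sUnion_le' (hsubm i) W hWsub (fun x hx => (Finset.mem_filter.1 hx).2)
      have hρ0 : (0 : ℝ) < (ρ i : ℝ) := by exact_mod_cast hρ i
      have hφa0 : (0 : ℝ) ≤ φ i (a i) := (hsubm i).2.1 (a i) subset_rfl
      have hδ0 : 0 ≤ δ i := by
        rw [hδdef]
        positivity
      have hWcard : (W.card : ℝ) ≤ (ρ i : ℝ) := by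
        have h1 := Finset.card_filter_le (ψ i) (fun x => φ i x ≤ δ i)
        exact_mod_cast le_trans h1 hcard
      have hρδ : (ρ i : ℝ) * δ i = φ i (a i) / 3 := by
        rw [hδdef]
        field_simp
      have hUle2 : φ i (⋃₀ (↑W : Set (Set ℕ))) ≤ φ i (a i) / 3 := by
        have := mul_le_mul_of_nonneg_right hWcard hδ0
        linarith
      have hUsub : ⋃₀ (↑W : Set (Set ℕ)) ⊆ a i := by
        intro p hp
        obtain ⟨y, hy, hyp⟩ := hp
        exact hWsub y (by exact_mod_cast hy) hyp
      have hsplit : a i = ⋃₀ (↑W : Set (Set ℕ)) ∪ (a i \ ⋃₀ (↑W : Set (Set ℕ))) :=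
        (Set.union_diff_cancel hUsub).symm
      have hremlb : ((nIdx i : ℝ) + 1) ≤ φ i (a i \ ⋃₀ (↑W : Set (Set ℕ))) := by
        have h1 : φ i (a i) ≤ φ i (⋃₀ (↑W : Set (Set ℕ))) +
            φ i (a i \ ⋃₀ (↑W : Set (Set ℕ))) := by
          conv_lhs => rw [hsplit]
          exact (hsubm i).2.2.2 _ _ hUsub Set.diff_subset
        linarith
      obtain ⟨b, hbrem, hblb, hbub⟩ := greedy_exists' (hsubm i)
        (Set.diff_subset) ((hafin i).diff) (by positivity) hremlb
        (fun p hp => hK₀ i hiN p hp)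
      refine ⟨b, hbrem.trans Set.diff_subset, hbub, fun _ => ⟨hblb, ?_⟩⟩
      intro x hxψ hxδ
      have hxW : x ∈ W := Finset.mem_filter.2 ⟨hxψ, hxδ⟩
      have hxU : x ⊆ ⋃₀ (↑W : Set (Set ℕ)) := Set.subset_sUnion_of_mem (by exact_mod_cast hxW)
      rw [Set.eq_empty_iff_forall_notMem]
      rintro p ⟨hpb, hpx⟩
      exact (hbrem hpb).2 (hxU hpx)
    · refine ⟨∅, Set.empty_subset _, ?_, fun h => absurd h hcase⟩
      rw [(hsubm i).1]
      linarith
  choose bfun hb1 hb2 hb3 using key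
  set B : (ℕ → Finset (Set ℕ)) → Set ℕ := fun ψ => ⋃ j, bfun ψ j with hBdef
  have hBa : ∀ ψ i, B ψ ∩ a i = bfun ψ i := by
    intro ψ i
    apply Set.Subset.antisymm
    · rintro p ⟨hpB, hpa⟩
      obtain ⟨j, hpj⟩ := Set.mem_iUnion.1 hpB
      rcases eq_or_ne j i with rfl | hne
      · exact hpj
      · exact absurd hpa (Set.disjoint_left.1 (hadisj j i hne) (hb1 ψ j hpj))
    · intro p hp
      exact ⟨Set.mem_iUnion.2 ⟨i, hp⟩, hb1 ψ i hp⟩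
  set AA : ℕ → Set ℕ := fun n => ⋃ i ∈ L n, a i with hAAdef
  have haA : ∀ n i, i ∈ L n → a i ⊆ AA n := by
    intro n i h
    exact Set.subset_biUnion_of_mem h
  have hAa : ∀ n i, i ∉ L n → AA n ∩ a i = ∅ := by
    intro n i hni
    rw [Set.eq_empty_iff_forall_notMem]
    rintro p ⟨hpA, hpa⟩
    obtain ⟨j, hjL, hpj⟩ := Set.mem_iUnion₂.1 hpA
    rcases eq_or_ne j i with rfl | hne
    · exact hni hjL
    · exact (Set.disjoint_left.1 (hadisj j i hne) hpj) hpa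
  have hAinj : Function.Injective AA := by
    intro n m hnm
    by_contra hne
    obtain ⟨i, hi⟩ := (hLinf n).nonempty
    obtain ⟨p, hp⟩ := hane i
    have hpA : p ∈ AA m := by rw [← hnm]; exact Set.mem_iUnion₂.2 ⟨i, hi, hp⟩
    have hiLm : i ∉ L m := Set.disjoint_left.1 (hLdisj n m hne) hi
    have hemp := hAa m i hiLm
    have hmem2 : p ∈ (∅ : Set ℕ) := by rw [← hemp]; exact ⟨hpA, hp⟩
    exact hmem2
  have h𝓐card : #(Set.range AA) = ℵ₀ := by
    rw [Cardinal.mk_range_eq _ hAinj, Cardinal.mk_nat]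
  -- Orthogonality
  have horth : IOrthogonal I (Set.range AA) (B '' Ψ) := by
    rintro s ⟨n, rfl⟩ t ⟨ψ, hψ, rfl⟩
    rw [hmem]
    refine ⟨((n : ℝ) + 1) + K₀, fun i => ?_⟩
    by_cases hiL : i ∈ L n
    · have h1 : (AA n ∩ B ψ) ∩ a i ⊆ bfun ψ i := by
        rw [← hBa ψ i]
        intro p hp
        exact ⟨hp.1.2, hp.2⟩
      have h2 := (hsubm i).2.2.1 _ _ h1 (hb1 ψ i)
      have h3 := hb2 ψ i
      rw [hnIdx_eq i n hiL] at h3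
      linarith
    · have hemp : (AA n ∩ B ψ) ∩ a i = ∅ := by
        rw [Set.eq_empty_iff_forall_notMem]
        rintro p ⟨⟨hpA, _⟩, hpa⟩
        have := hAa n i hiL
        have : p ∈ (∅ : Set ℕ) := by rw [← this]; exact ⟨hpA, hpa⟩
        exact this
      rw [hemp, (hsubm i).1]
      have : (0 : ℝ) ≤ (n : ℝ) := Nat.cast_nonneg _
      linarith
  -- No separation
  have hnonsep : ∀ C : Set ℕ, ¬ ISeparates I (Set.range AA) (B '' Ψ) C := by
    intro C hsep
    have hsA := hsep.1
    have hsB := hsep.2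
    have hO : ∀ n, (C ∩ ⋃ i ∈ L n, a i) ∈ I := by
      intro n
      have h := hsA (AA n) ⟨n, rfl⟩
      rwa [Set.inter_comm] at h
    obtain ⟨ψ, hψΨ, hgood⟩ := hcov C hO
    have hBC : B ψ \ C ∈ I := hsB (B ψ) ⟨ψ, hψΨ, rfl⟩
    obtain ⟨K₁, hK₁⟩ := (hmem _).1 hBC
    obtain ⟨n, hn⟩ := exists_nat_gt K₁
    obtain ⟨K₂, hK₂⟩ := (hmem _).1 (hsA (AA n) ⟨n, rfl⟩)
    set K₂' := max K₂ 0 with hK₂'def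
    set M := max (3 * ((n : ℝ) + 1)) (3 * K₂') with hMdef
    have hev : ∀ᶠ i in atTop, M ≤ φ i (a i) / (ρ i : ℝ) := hlim.eventually_ge_atTop M
    obtain ⟨N₁, hN₁⟩ := eventually_atTop.1 hev
    obtain ⟨i, hiGood, hilt⟩ := (hgood n).exists_gt (max N₀ N₁)
    obtain ⟨hiL, hixψ⟩ := hiGood
    have hiN₀ : N₀ ≤ i := le_of_lt (lt_of_le_of_lt (le_max_left _ _) hilt)
    have hiN₁ : N₁ ≤ i := le_of_lt (lt_of_le_of_lt (le_max_right _ _) hilt)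
    have hρi : (0 : ℝ) < (ρ i : ℝ) := by exact_mod_cast hρ i
    have hρi1 : (1 : ℝ) ≤ (ρ i : ℝ) := by exact_mod_cast hρ i
    have hMφ : M ≤ φ i (a i) / (ρ i : ℝ) := hN₁ i hiN₁
    have hn0 : (0 : ℝ) ≤ (n : ℝ) := Nat.cast_nonneg _
    have hM0 : 0 ≤ M := le_trans (by linarith) (le_max_left _ _)
    have hφa : M ≤ φ i (a i) := by
      have h1 : M * (ρ i : ℝ) ≤ φ i (a i) := (le_div_iff₀ hρi).1 hMφ
      nlinarith
    have hbig : 3 * ((n : ℝ) + 1) ≤ φ i (a i) := le_trans (le_max_left _ _) hφa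
    have hδK : K₂' ≤ δ i := by
      have h1 : 3 * K₂' ≤ φ i (a i) / (ρ i : ℝ) := le_trans (le_max_right _ _) hMφ
      have h2 : δ i = (φ i (a i) / (ρ i : ℝ)) / 3 := by
        rw [hδdef]
        rw [div_div, mul_comm]
      rw [h2]
      linarith
    obtain ⟨hblb, hbavoid⟩ := hb3 ψ i ⟨hiN₀, (hΨ ψ hψΨ i).1, (hΨ ψ hψΨ i).2,
      by rw [hnIdx_eq i n hiL]; exact hbig⟩
    have hCa : (AA n ∩ C) ∩ a i = C ∩ a i := by
      apply Set.Subset.antisymm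
      · intro p hp
        exact ⟨hp.1.2, hp.2⟩
      · intro p hp
        exact ⟨⟨haA n i hiL hp.2, hp.1⟩, hp.2⟩
    have hφCa : φ i (C ∩ a i) ≤ K₂' := by
      have h := hK₂ i
      rw [hCa] at h
      exact le_trans h (le_max_left _ _)
    have hempty : bfun ψ i ∩ (C ∩ a i) = ∅ :=
      hbavoid (C ∩ a i) hixψ (le_trans hφCa hδK)
    have hbC : bfun ψ i ∩ C = ∅ := by
      rw [Set.eq_empty_iff_forall_notMem]
      rintro p ⟨hpb, hpC⟩
      have hmem3 : p ∈ bfun ψ i ∩ (C ∩ a i) := ⟨hpb, hpC, hb1 ψ i hpb⟩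
      rw [hempty] at hmem3
      exact hmem3
    have hsub : bfun ψ i ⊆ (B ψ \ C) ∩ a i := by
      intro p hpb
      refine ⟨⟨Set.mem_iUnion.2 ⟨i, hpb⟩, ?_⟩, hb1 ψ i hpb⟩
      intro hpC
      have hmem4 : p ∈ bfun ψ i ∩ C := ⟨hpb, hpC⟩
      rw [hbC] at hmem4
      exact hmem4
    have hmono3 := (hsubm i).2.2.1 _ _ hsub Set.inter_subset_right
    have h5 := hK₁ i
    rw [hnIdx_eq i n hiL] at hblb
    linarith
  exact ⟨#(B '' Ψ), Cardinal.mk_image_le, Set.range AA, B '' Ψ, ⟨horth, hnonsep⟩,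
    h𝓐card, rfl⟩
end

section
/- Let I = I⟨a_i,φ_i⟩ be a tall fragmented ideal and ρ ∈ ω^ω with ρ > 0 such that lim_{i→∞} φ_i(a_i)/ρ(i) = +∞. Let L ⊆ ω be infinite, A := ⋃_{i∈L} a_i, n < ω, f ∈ ω^ω, and let {ψ_k}_{k<ω} be a sequence of slaloms where each ψ_k is defined on L, ψ_k(i) is a set of at most ρ(i) subsets x of a_i with φ_i(x) ≤ f(k). Then there exists Z ∈ I with Z ⊆ A such that: (i) φ_i(Z ∩ a_i) > n for all but finitely many i ∈ L; and (ii) for every k < ω, for all but finitely many i ∈ L, every x ∈ ψ_k(i) satisfies x ∩ Z = ∅. -/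
open Set Filter Cardinal

lemma submeasure_biUnion_le {s : Set ℕ} {φ : Set ℕ → ℝ} (hφ : IsSubmeasureOn s φ)
    {β : Type*} (B : Finset β) (g : β → Set ℕ) :
    (∀ b ∈ B, g b ⊆ s) → φ (⋃ b ∈ B, g b) ≤ ∑ b ∈ B, φ (g b) := by
  classical
  induction B using Finset.induction_on with
  | empty => intro _; simp [hφ.1]
  | @insert b B hb ih =>
    intro hg
    rw [Finset.set_biUnion_insert, Finset.sum_insert hb]
    have h1 : g b ⊆ s := hg b (Finset.mem_insert_self b B)
    have h2 : (⋃ x ∈ B, g x) ⊆ s :=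
      Set.iUnion₂_subset fun x hx => hg x (Finset.mem_insert_of_mem hx)
    have h3 := ih (fun x hx => hg x (Finset.mem_insert_of_mem hx))
    have h4 := hφ.2.2.2 (g b) (⋃ x ∈ B, g x) h1 h2
    linarith

lemma tall_key (a : ℕ → Set ℕ) (φ : ℕ → Set ℕ → ℝ) (I : Set (Set ℕ))
    (hfrag : IsFragmentation I a φ) (htall : IsTall I) (n : ℕ) :
    ∃ m : ℕ, n < m ∧
      {i | ∃ x, x ⊆ a i ∧ (m : ℝ) < φ i x ∧
        ∀ y, y ⊆ x → ¬((n : ℝ) < φ i y ∧ φ i y ≤ (m : ℝ))}.Finite := by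
  classical
  obtain ⟨hpart, hsub, hImem⟩ := hfrag
  by_contra hcon
  push_neg at hcon
  have hT : ∀ k : ℕ, {i | ∃ x, x ⊆ a i ∧ ((n + k + 1 : ℕ) : ℝ) < φ i x ∧
      ∀ y, y ⊆ x → ¬((n : ℝ) < φ i y ∧ φ i y ≤ ((n + k + 1 : ℕ) : ℝ))}.Infinite := by
    intro k
    have h := hcon (n + k + 1) (by omega)
    simp only [not_and, not_le]
    exact h
  choose w hw1 hw2 using fun k b => (hT k).exists_gt b
  set j : ℕ → ℕ := fun k => Nat.rec (w 0 0) (fun k jk => w (k + 1) jk) k with hj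
  have hjmem : ∀ k, j k ∈ {i | ∃ x, x ⊆ a i ∧ ((n + k + 1 : ℕ) : ℝ) < φ i x ∧
      ∀ y, y ⊆ x → ¬((n : ℝ) < φ i y ∧ φ i y ≤ ((n + k + 1 : ℕ) : ℝ))} := by
    intro k
    cases k with
    | zero => exact hw1 0 0
    | succ k => exact hw1 (k + 1) (j k)
  have hjmono : StrictMono j := strictMono_nat_of_lt_succ fun k => hw2 (k + 1) (j k)
  have hpt : ∀ k, ∃ p, p ∈ a (j k) ∧ ((k : ℝ) + 1) < φ (j k) {p} := by
    intro k
    obtain ⟨x, hxa, hxbig, hxno⟩ := hjmem k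
    have hxfin : x.Finite := (hpart.2.1 (j k)).subset hxa
    set Fam := hxfin.toFinset.powerset.filter
      (fun s : Finset ℕ => ((n + k + 1 : ℕ) : ℝ) < φ (j k) ↑s) with hFam
    have hFamne : Fam.Nonempty := by
      refine ⟨hxfin.toFinset, Finset.mem_filter.mpr ⟨Finset.mem_powerset_self _, ?_⟩⟩
      rwa [hxfin.coe_toFinset]
    obtain ⟨s, hsF, hsmin⟩ := Finset.exists_min_image Fam Finset.card hFamne
    rw [hFam, Finset.mem_filter, Finset.mem_powerset] at hsF
    obtain ⟨hs_sub, hs_big⟩ := hsF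
    have hs_sub' : (↑s : Set ℕ) ⊆ x := by
      rw [← hxfin.coe_toFinset]; exact_mod_cast hs_sub
    have hsne : s.Nonempty := by
      rcases Finset.eq_empty_or_nonempty s with rfl | h
      · exfalso
        rw [Finset.coe_empty, (hsub (j k)).1] at hs_big
        have : (0 : ℝ) ≤ ((n + k + 1 : ℕ) : ℝ) := by positivity
        linarith
      · exact h
    obtain ⟨p, hp⟩ := hsne
    have herase_sub : (↑(s.erase p) : Set ℕ) ⊆ x :=
      (Finset.coe_subset.mpr (Finset.erase_subset p s)).trans hs_sub'
    have herase : φ (j k) ↑(s.erase p) ≤ (n : ℝ) := by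
      have hcard : (s.erase p).card < s.card := Finset.card_erase_lt_of_mem hp
      have hnotFam : s.erase p ∉ Fam := by
        intro hmem
        have := hsmin _ hmem
        omega
      have h1 : ¬ ((n + k + 1 : ℕ) : ℝ) < φ (j k) ↑(s.erase p) := by
        intro hlt
        exact hnotFam (Finset.mem_filter.mpr
          ⟨Finset.mem_powerset.mpr ((Finset.erase_subset p s).trans hs_sub), hlt⟩)
      have h2 := hxno ↑(s.erase p) herase_sub
      by_contra hgt
      push_neg at h1 hgt
      exact h2 ⟨hgt, h1⟩
    have hp_mem_a : p ∈ a (j k) := hxa (hs_sub' hp)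
    have hins : (↑s : Set ℕ) = (↑(s.erase p) : Set ℕ) ∪ {p} := by
      rw [Set.union_singleton, ← Finset.coe_insert, Finset.insert_erase hp]
    have hsubadd : φ (j k) ↑s ≤ φ (j k) ↑(s.erase p) + φ (j k) {p} := by
      rw [hins]
      exact (hsub (j k)).2.2.2 _ _ (herase_sub.trans hxa)
        (Set.singleton_subset_iff.mpr hp_mem_a)
    refine ⟨p, hp_mem_a, ?_⟩
    have : ((n + k + 1 : ℕ) : ℝ) < φ (j k) ↑s := hs_big
    push_cast at this
    linarith
  choose p hp1 hp2 using hpt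
  have hpinj : Function.Injective p := by
    intro k l hkl
    by_contra hne
    have hdisj := hpart.2.2.1 (j k) (j l) (fun h => hne (hjmono.injective h))
    exact Set.disjoint_left.mp hdisj (hp1 k) (hkl ▸ hp1 l)
  obtain ⟨Z, hZX, hZinf, hZI⟩ :=
    htall (Set.range p) (Set.subset_univ _) (Set.infinite_range_of_injective hpinj)
  obtain ⟨K, hK⟩ := (hImem Z).mp hZI
  have hSinf : (p ⁻¹' Z).Infinite := by
    intro hfin
    have hsub' : Z ⊆ p '' (p ⁻¹' Z) := by
      intro z hz
      obtain ⟨k, rfl⟩ := hZX hz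
      exact ⟨k, hz, rfl⟩
    exact hZinf ((hfin.image p).subset hsub')
  obtain ⟨k, hkS, hkgt⟩ := hSinf.exists_gt ⌈K⌉₊
  have h1 : φ (j k) {p k} ≤ φ (j k) (Z ∩ a (j k)) :=
    (hsub (j k)).2.2.1 _ _ (Set.singleton_subset_iff.mpr ⟨hkS, hp1 k⟩) Set.inter_subset_right
  have h2 := hK (j k)
  have hK0 : (0 : ℝ) ≤ K :=
    le_trans ((hsub 0).2.1 _ Set.inter_subset_right) (hK 0)
  have h3 : K ≤ (⌈K⌉₊ : ℝ) := Nat.le_ceil K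
  have h4 : ((⌈K⌉₊ : ℕ) : ℝ) < (k : ℝ) := by exact_mod_cast hkgt
  have h5 := hp2 k
  linarith

/-- Diagonalizing against countably many slaloms: let `I = I⟨a_i, φ_i⟩` be a tall
fragmented ideal and `ρ > 0` with `φ_i(a_i)/ρ(i) → ∞`. Let `L ⊆ ω` be infinite,
`A = ⋃_{i ∈ L} a_i`, `n < ω`, `f ∈ ω^ω`, and let `{ψ_k}` be slaloms on `L` such that
`ψ_k(i)` consists of at most `ρ(i)` subsets `x` of `a_i` with `φ_i(x) ≤ f(k)`. Then there
is `Z ∈ I` with `Z ⊆ A` such that (i) `φ_i(Z ∩ a_i) > n` for all but finitely many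
`i ∈ L`, and (ii) for every `k`, for all but finitely many `i ∈ L`, every `x ∈ ψ_k(i)`
is disjoint from `Z`. -/
theorem diag_slalom
    (a : ℕ → Set ℕ) (φ : ℕ → Set ℕ → ℝ) (I : Set (Set ℕ))
    (hfrag : IsFragmentation I a φ) (htall : IsTall I)
    (ρ : ℕ → ℕ) (hρ : ∀ i, 0 < ρ i)
    (hlim : Tendsto (fun i => φ i (a i) / (ρ i : ℝ)) atTop atTop)
    (L : Set ℕ) (hL : L.Infinite)
    (n : ℕ) (f : ℕ → ℕ)
    (ψ : ℕ → ℕ → Finset (Set ℕ))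
    (hψ : ∀ k : ℕ, ∀ i ∈ L, (ψ k i).card ≤ ρ i ∧
      ∀ x ∈ ψ k i, x ⊆ a i ∧ φ i x ≤ (f k : ℝ)) :
    ∃ Z ∈ I, Z ⊆ (⋃ i ∈ L, a i) ∧
      {i | i ∈ L ∧ φ i (Z ∩ a i) ≤ (n : ℝ)}.Finite ∧
      ∀ k : ℕ, {i | i ∈ L ∧ ∃ x ∈ ψ k i, (x ∩ Z).Nonempty}.Finite := by
  classical
  have hpart := hfrag.1
  have hsub := hfrag.2.1
  have hImem := hfrag.2.2
  obtain ⟨m, hnm, hbadA⟩ := tall_key a φ I hfrag htall n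
  set Sbad : Set ℕ := {i | ∃ x, x ⊆ a i ∧ (m : ℝ) < φ i x ∧
      ∀ y, y ⊆ x → ¬((n : ℝ) < φ i y ∧ φ i y ≤ (m : ℝ))} with hSbad
  set F : ℕ → ℝ := fun r => ∑ k ∈ Finset.range (r + 1), ((f k : ℝ) + 1) with hF
  set rfun : ℕ → ℕ :=
    fun i => Nat.findGreatest (fun r => (ρ i : ℝ) * (F r + m + 1) ≤ φ i (a i)) i with hrfun
  have hFnonneg : ∀ r, 0 ≤ F r := fun r => Finset.sum_nonneg (fun k _ => by positivity)
  have ha : ∀ r : ℕ, ∀ᶠ i in atTop, r ≤ rfun i := by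
    intro r
    have h1 : ∀ᶠ i in atTop, F r + m + 1 ≤ φ i (a i) / (ρ i : ℝ) :=
      hlim.eventually_ge_atTop _
    filter_upwards [h1, eventually_ge_atTop r] with i hi1 hi2
    have hρpos : (0 : ℝ) < (ρ i : ℝ) := by exact_mod_cast hρ i
    have hPi : (ρ i : ℝ) * (F r + m + 1) ≤ φ i (a i) := by
      rw [mul_comm]; exact (le_div_iff₀ hρpos).mp hi1
    exact Nat.le_findGreatest hi2 hPi
  have hb : ∀ᶠ i in atTop, (ρ i : ℝ) * (F (rfun i) + m + 1) ≤ φ i (a i) := by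
    have h1 : ∀ᶠ i in atTop, F 0 + m + 1 ≤ φ i (a i) / (ρ i : ℝ) :=
      hlim.eventually_ge_atTop _
    filter_upwards [h1] with i hi1
    have hρpos : (0 : ℝ) < (ρ i : ℝ) := by exact_mod_cast hρ i
    have hP0 : (ρ i : ℝ) * (F 0 + m + 1) ≤ φ i (a i) := by
      rw [mul_comm]; exact (le_div_iff₀ hρpos).mp hi1
    have : rfun i = Nat.findGreatest
        (fun r => (ρ i : ℝ) * (F r + m + 1) ≤ φ i (a i)) i := rfl
    rw [this]
    exact Nat.findGreatest_spec (P := fun r => (ρ i : ℝ) * (F r + m + 1) ≤ φ i (a i))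
      (Nat.zero_le i) hP0
  set U : ℕ → Set ℕ :=
    fun i => ⋃ k ∈ Finset.range (rfun i + 1), ⋃₀ (↑(ψ k i) : Set (Set ℕ)) with hU
  set G : Set ℕ := {i | i ∈ L ∧ ((ρ i : ℝ) * (F (rfun i) + m + 1) ≤ φ i (a i)) ∧ i ∉ Sbad}
    with hG
  have hQ : ∀ i ∈ G, ∃ y, y ⊆ a i \ U i ∧ (n : ℝ) < φ i y ∧ φ i y ≤ (m : ℝ) := by
    intro i hi
    obtain ⟨hiL, hiP, hnb⟩ := hi
    have hUsub : U i ⊆ a i := by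
      refine Set.iUnion₂_subset fun k _ => Set.sUnion_subset fun x hx =>
        ((hψ k i hiL).2 x (Finset.mem_coe.mp hx)).1
    have hUle : φ i (U i) ≤ (ρ i : ℝ) * F (rfun i) := by
      calc φ i (U i)
          ≤ ∑ k ∈ Finset.range (rfun i + 1), φ i (⋃₀ (↑(ψ k i) : Set (Set ℕ))) :=
            submeasure_biUnion_le (hsub i) _ _
              (fun k _ => Set.sUnion_subset fun x hx =>
                ((hψ k i hiL).2 x (Finset.mem_coe.mp hx)).1)
        _ ≤ ∑ k ∈ Finset.range (rfun i + 1), (ρ i : ℝ) * ((f k : ℝ) + 1) := by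
            refine Finset.sum_le_sum fun k _ => ?_
            have hsl := hψ k i hiL
            have hρ0 : (0 : ℝ) ≤ (ρ i : ℝ) := by positivity
            have hcard : ((ψ k i).card : ℝ) ≤ (ρ i : ℝ) := by exact_mod_cast hsl.1
            have hf0 : (0 : ℝ) ≤ (f k : ℝ) := by positivity
            calc φ i (⋃₀ (↑(ψ k i) : Set (Set ℕ)))
                = φ i (⋃ x ∈ ψ k i, x) := by
                  rw [Set.sUnion_eq_biUnion, Finset.set_biUnion_coe]
              _ ≤ ∑ x ∈ ψ k i, φ i x :=
                  submeasure_biUnion_le (hsub i) _ _ (fun x hx => (hsl.2 x hx).1)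
              _ ≤ ∑ _x ∈ ψ k i, (f k : ℝ) :=
                  Finset.sum_le_sum fun x hx => (hsl.2 x hx).2
              _ = ((ψ k i).card : ℝ) * (f k : ℝ) := by
                  rw [Finset.sum_const, nsmul_eq_mul]
              _ ≤ (ρ i : ℝ) * ((f k : ℝ) + 1) := by nlinarith
        _ = (ρ i : ℝ) * F (rfun i) := by rw [hF, ← Finset.mul_sum]
    have hsplit : φ i (a i) ≤ φ i (a i \ U i) + φ i (U i) := by
      have heq : a i = (a i \ U i) ∪ U i := (Set.diff_union_of_subset hUsub).symm
      calc φ i (a i) = φ i ((a i \ U i) ∪ U i) := by rw [← heq]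
        _ ≤ _ := (hsub i).2.2.2 _ _ Set.diff_subset hUsub
    have hρ1 : (1 : ℝ) ≤ (ρ i : ℝ) := by exact_mod_cast hρ i
    have hm0 : (0 : ℝ) ≤ (m : ℝ) := by positivity
    have hw : (m : ℝ) < φ i (a i \ U i) := by nlinarith [hFnonneg (rfun i)]
    by_contra hno
    push_neg at hno
    refine hnb ⟨a i \ U i, Set.diff_subset, hw, fun y hy hcond => ?_⟩
    exact absurd hcond.2 (not_le.mpr (hno y hy hcond.1))
  have hz : ∀ i, ∃ y : Set ℕ,
      (i ∈ G → y ⊆ a i \ U i ∧ (n : ℝ) < φ i y ∧ φ i y ≤ (m : ℝ)) ∧ (i ∉ G → y = ∅) := by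
    intro i
    by_cases h : i ∈ G
    · obtain ⟨y, hy⟩ := hQ i h
      exact ⟨y, fun _ => hy, fun h' => absurd h h'⟩
    · exact ⟨∅, fun h' => absurd h' h, fun _ => rfl⟩
  choose z hz1 hz2 using hz
  have hzsub : ∀ i, z i ⊆ a i := by
    intro i
    by_cases h : i ∈ G
    · exact ((hz1 i h).1).trans Set.diff_subset
    · rw [hz2 i h]; exact Set.empty_subset _
  set Z : Set ℕ := ⋃ i, z i with hZdef
  have hZcap : ∀ i, Z ∩ a i = z i := by
    intro i
    apply Set.Subset.antisymm
    · rintro q ⟨hqZ, hqa⟩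
      obtain ⟨j, hj⟩ := Set.mem_iUnion.mp hqZ
      rcases eq_or_ne j i with rfl | hne
      · exact hj
      · exact absurd hqa (Set.disjoint_left.mp (hpart.2.2.1 j i hne) (hzsub j hj))
    · intro q hq
      exact ⟨Set.mem_iUnion.mpr ⟨i, hq⟩, hzsub i hq⟩
  obtain ⟨N, hN⟩ := eventually_atTop.mp hb
  refine ⟨Z, ?_, ?_, ?_, ?_⟩
  · refine (hImem Z).mpr ⟨(m : ℝ), fun i => ?_⟩
    rw [hZcap i]
    by_cases h : i ∈ G
    · exact (hz1 i h).2.2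
    · rw [hz2 i h, (hsub i).1]; positivity
  · intro q hq
    obtain ⟨j, hj⟩ := Set.mem_iUnion.mp hq
    have hjG : j ∈ G := by
      by_contra h
      rw [hz2 j h] at hj
      exact hj
    exact Set.mem_biUnion hjG.1 (hzsub j hj)
  · apply Set.Finite.subset (hbadA.union (Set.finite_Iio N))
    rintro i ⟨hiL, hile⟩
    by_contra hc
    simp only [Set.mem_union, Set.mem_Iio, not_or, not_lt] at hc
    obtain ⟨h1, h2⟩ := hc
    have hiG : i ∈ G := ⟨hiL, hN i h2, h1⟩
    have := (hz1 i hiG).2.1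
    rw [hZcap i] at hile
    have hnm' : ((n : ℝ)) < (m : ℝ) := by exact_mod_cast hnm
    linarith
  · intro k
    obtain ⟨N₁, hN₁⟩ := eventually_atTop.mp (ha k)
    apply Set.Finite.subset (hbadA.union (Set.finite_Iio (max N N₁)))
    rintro i ⟨hiL, x, hxmem, q, hqx, hqZ⟩
    by_contra hc
    simp only [Set.mem_union, Set.mem_Iio, not_or, not_lt] at hc
    obtain ⟨h1, h2⟩ := hc
    have hiG : i ∈ G := ⟨hiL, hN i (le_trans (le_max_left _ _) h2), h1⟩
    have hqa : q ∈ a i := ((hψ k i hiL).2 x hxmem).1 hqx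
    have hqz : q ∈ z i := by
      rw [← hZcap i]; exact ⟨hqZ, hqa⟩
    have hqU : q ∉ U i := ((hz1 i hiG).1 hqz).2
    refine hqU ?_
    have hkle : k ≤ rfun i := hN₁ i (le_trans (le_max_right _ _) h2)
    exact Set.mem_biUnion (Finset.mem_range.mpr (by omega))
      (Set.mem_sUnion.mpr ⟨x, Finset.mem_coe.mpr hxmem, hqx⟩)
end

section
/- Let I = I⟨a_i,φ_i⟩ be a tall fragmented ideal, L̄ = {L_n : n < ω} a partition of ω into infinite sets, ρ ∈ ω^ω with ρ > 0, θ a regular uncountable cardinal, and ℰ ⊆ ω^ω a fixed family satisfying conditions (i)–(iii) below. Then for every <θ-ρ-strong covering family Ψ'' (with respect to I and L̄), 𝔟^{ρ^{id}}(I,L̄) ≤ |Ψ''|. -/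
open Set Filter Cardinal

/-- The family `S(2^ā, g)` of slaloms `ψ` where `ψ(i)` is a set of at most `g(i)`
subsets of `a_i`. -/
def SlalomFam (a : ℕ → Set ℕ) (g : ℕ → ℕ) : Set (ℕ → Finset (Set ℕ)) :=
  {ψ | ∀ i, (∀ x ∈ ψ i, x ⊆ a i) ∧ (ψ i).card ≤ g i}

/-- `ψ` belongs to `S̃(I, Lset, m, ρ)` (restricted to `Lset`): for some `e ∈ E`, on
`Lset` the slalom `ψ(i)` consists of at most `ρ(i)^{e(i)}` subsets of `a_i` of
submeasure at most `m`. -/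
def InSTilde (a : ℕ → Set ℕ) (φ : ℕ → Set ℕ → ℝ) (ρ : ℕ → ℕ) (E : Set (ℕ → ℕ))
    (Lset : Set ℕ) (m : ℕ) (ψ : ℕ → Finset (Set ℕ)) : Prop :=
  ∃ e ∈ E, ∀ i ∈ Lset, (∀ x ∈ ψ i, x ⊆ a i ∧ φ i x ≤ (m : ℝ)) ∧ (ψ i).card ≤ ρ i ^ e i

/-- Let `I = I⟨a_i, φ_i⟩` be a tall fragmented ideal, `L̄ = {L_n}` a partition of `ω`
into infinite sets, `ρ > 0`, `θ` a regular uncountable cardinal and `E ⊆ ω^ω` a family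
satisfying the standing conditions (i)–(iii). Then for every `<θ`-`ρ`-strong covering
family `Ψ''` (with respect to `I` and `L̄`) we have `𝔟^{ρ^{id}}(I, L̄) ≤ |Ψ''|`:
there is a family `Ψ ⊆ S(2^ā, ρ^{id})` witnessing `𝔟^{ρ^{id}}(I, L̄)` of size `≤ |Ψ''|`. -/
theorem bParam_le_of_strong_covering
    (a : ℕ → Set ℕ) (φ : ℕ → Set ℕ → ℝ) (I : Set (Set ℕ))
    (hfrag : IsFragmentation I a φ) (htall : IsTall I)
    (L : ℕ → Set ℕ) (hLinf : ∀ n, (L n).Infinite)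
    (hLdisj : ∀ n m, n ≠ m → Disjoint (L n) (L m)) (hLcov : (⋃ n, L n) = Set.univ)
    (ρ : ℕ → ℕ) (hρ : ∀ i, 0 < ρ i)
    (θ : Cardinal) (hθreg : θ.IsRegular) (hθunc : ℵ₀ < θ)
    (E : Set (ℕ → ℕ))
    (hE1 : ∀ e ∈ E, Monotone e ∧ Tendsto e atTop atTop ∧ (∀ i, e i ≤ i) ∧
      Tendsto (fun i => i - e i) atTop atTop)
    (hE2 : ∀ e ∈ E, ∃ e' ∈ E, ∀ᶠ i in atTop, e i + 1 ≤ e' i)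
    (hE3 : ∀ C : Set (ℕ → ℕ), C ⊆ E → C.Countable →
      ∃ e ∈ E, ∀ c ∈ C, ∀ᶠ i in atTop, c i ≤ e i)
    (Ψ'' : Set (ℕ → Finset (Set ℕ)))
    (hΨ''sub : Ψ'' ⊆ SlalomFam a (fun i => ρ i ^ i))
    (hΨ''cov : ∀ Ψ : Set ((ℕ → Finset (Set ℕ)) × ℕ), #Ψ < θ →
      (∀ p ∈ Ψ, ∃ m : ℕ, InSTilde a φ ρ E (L p.2) m p.1) →
      ∃ ψ'' ∈ Ψ'', ∀ p ∈ Ψ, {i | i ∈ L p.2 ∧ p.1 i ⊆ ψ'' i}.Infinite) :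
    ∃ Ψ : Set (ℕ → Finset (Set ℕ)), Ψ ⊆ SlalomFam a (fun i => ρ i ^ i) ∧
      (∀ Y : Set ℕ, (∀ n : ℕ, (Y ∩ ⋃ i ∈ L n, a i) ∈ I) →
        ∃ ψ ∈ Ψ, ∀ n : ℕ, {i | i ∈ L n ∧ Y ∩ a i ∈ ψ i}.Infinite) ∧
      #Ψ ≤ #Ψ'' := by
  obtain ⟨e, heE, -⟩ := hE3 ∅ (Set.empty_subset _) Set.countable_empty
  refine ⟨Ψ'', hΨ''sub, ?_, le_rfl⟩
  intro Y hY
  set ψY : ℕ → Finset (Set ℕ) := fun i => {Y ∩ a i} with hψY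
  have hmem : ∀ p ∈ Set.range (fun n => (ψY, n)), ∃ m, InSTilde a φ ρ E (L p.2) m p.1 := by
    rintro p ⟨n, rfl⟩
    obtain ⟨K, hK⟩ := (hfrag.2.2 _).1 (hY n)
    refine ⟨⌈K⌉₊, e, heE, fun i hi => ?_⟩
    constructor
    · intro x hx
      simp only [ψY, Finset.mem_singleton] at hx
      subst hx
      refine ⟨Set.inter_subset_right, ?_⟩
      have h1 := hK i
      have h2 : (Y ∩ ⋃ j ∈ L n, a j) ∩ a i = Y ∩ a i := by
        ext t; constructor
        · rintro ⟨⟨hty, -⟩, hta⟩; exact ⟨hty, hta⟩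
        · rintro ⟨hty, hta⟩; exact ⟨⟨hty, Set.mem_biUnion hi hta⟩, hta⟩
      rw [h2] at h1
      exact h1.trans (Nat.le_ceil K)
    · simpa [ψY] using Nat.one_le_pow _ _ (hρ i)
  obtain ⟨ψ'', hψ''Ψ, hcov⟩ := hΨ''cov _
    (lt_of_le_of_lt (Cardinal.mk_range_le.trans_eq Cardinal.mk_nat) hθunc) hmem
  refine ⟨ψ'', hψ''Ψ, fun n => ?_⟩
  have hinf := hcov (ψY, n) ⟨n, rfl⟩
  refine hinf.mono fun i hi => ⟨hi.1, ?_⟩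
  have h := hi.2
  simpa [ψY, Finset.singleton_subset_iff] using h
end
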